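/- arXiv:1710.04568 — 7 statements merged into one kernel-verified Lean document; each statement's English description precedes it below -/
import Mathlib

section
/- Let O be the ring of integers of a finite extension of Q_p with uniformizer π, let Λ = O[[T]], and let P = (T − c) be a height-one prime of Λ generated by a linear distinguished polynomial, with c ∈ πO. Let Y be a finitely generated torsion Λ-module and C a non-negative integer with Fitt_{Λ_P, i}(Y_P) = P^C Λ_P. For each n > 0 set P_n = (T − c − π^n) and define C(n) by Fitt_{O,i}(Y ⊗_Λ Λ/P_n) = π^{C(n)} O. Then limsup_{n→∞} |C(n) − C·n| < ∞. -/
open PowerSeries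

lemma smulTop {O : Type*} [CommRing O] (J : Ideal O) : (J • ⊤ : Submodule O O) = J := by
  rw [smul_eq_mul, Ideal.mul_top]

lemma divLin {O : Type*} [CommRing O] [IsDomain O] [IsDiscreteValuationRing O]
    [IsAdicComplete (IsLocalRing.maximalIdeal O) O]
    (π : O) (hπ : Irreducible π) (a : O) (ha : a ∈ Ideal.span {π}) (f : PowerSeries O) :
    ∃ (q : PowerSeries O) (r : O),
      f = (PowerSeries.X - PowerSeries.C a) * q + PowerSeries.C r := by
  set m := IsLocalRing.maximalIdeal O with hm
  have hmax : m = Ideal.span {π} := (IsDiscreteValuationRing.irreducible_iff_uniformizer π).mp hπ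
  have ha' : a ∈ m := hmax ▸ ha
  set S : ℕ → ℕ → O := fun k N => ∑ j ∈ Finset.range N, coeff (k + j) f * a ^ j with hS
  have hsub : ∀ k {M N : ℕ}, M ≤ N → S k N - S k M ∈ m ^ M := by
    intro k M N h
    rw [hS]
    simp only
    rw [← Finset.sum_Ico_eq_sub _ h]
    refine Ideal.sum_mem _ (fun j hj => ?_)
    have hj' : M ≤ j := (Finset.mem_Ico.mp hj).1
    exact Ideal.mul_mem_left _ _ (Ideal.pow_le_pow_right hj' (Ideal.pow_mem_pow ha' j))
  have hcauchy : ∀ k, ∀ {M N : ℕ}, M ≤ N →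
      S k M ≡ S k N [SMOD ((m ^ M • ⊤ : Submodule O O))] := by
    intro k M N h
    rw [SModEq.sub_mem, smulTop]
    simpa using (m ^ M).neg_mem (hsub k h)
  choose L hL using fun k => (IsAdicComplete.toIsPrecomplete (I := m)).prec (hcauchy k)
  have hLmem : ∀ k N, S k N - L k ∈ m ^ N := by
    intro k N
    have := (hL k N)
    rwa [SModEq.sub_mem, smulTop] at this
  have hsum : ∀ k N, S k (N + 1) = coeff k f + a * S (k + 1) N := by
    intro k N
    rw [hS]
    simp only
    rw [Finset.sum_range_succ', Finset.mul_sum]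
    simp only [pow_zero, mul_one, add_zero]
    rw [add_comm]
    congr 1
    refine Finset.sum_congr rfl (fun i _ => ?_)
    rw [show k + (i + 1) = k + 1 + i by omega, pow_succ]
    ring
  have key : ∀ k, L k = coeff k f + a * L (k + 1) := by
    intro k
    have h0 : ∀ N : ℕ, L k - (coeff k f + a * L (k + 1)) ∈ m ^ N := by
      intro N
      have h1' := (m ^ (N + 1)).neg_mem (hLmem k (N + 1))
      rw [neg_sub] at h1'
      have h1 : L k - S k (N + 1) ∈ m ^ N := Ideal.pow_le_pow_right (Nat.le_succ N) h1'
      have h2 : a * (S (k + 1) N - L (k + 1)) ∈ m ^ N :=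
        Ideal.mul_mem_left _ _ (hLmem (k + 1) N)
      have heq : L k - (coeff k f + a * L (k + 1))
          = (L k - S k (N + 1)) + a * (S (k + 1) N - L (k + 1)) := by
        rw [hsum]; ring
      rw [heq]
      exact add_mem h1 h2
    have := (IsAdicComplete.toIsHausdorff (I := m)).haus
      (L k - (coeff k f + a * L (k + 1))) (fun N => by rw [SModEq.zero, smulTop]; exact h0 N)
    exact sub_eq_zero.mp this
  refine ⟨PowerSeries.mk (fun k => L (k + 1)), L 0, ?_⟩
  ext k
  rcases k with _ | k
  · simp only [coeff_zero_eq_constantCoeff, map_add, map_mul, map_sub,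
      constantCoeff_X, constantCoeff_C, zero_sub, coeff_mk, constantCoeff_mk]
    have := key 0
    simp only [coeff_zero_eq_constantCoeff] at this
    rw [this]; ring
  · rw [map_add, sub_mul, map_sub, coeff_succ_X_mul, coeff_C_mul, coeff_mk, coeff_mk,
      coeff_C]
    simp only [Nat.succ_ne_zero, if_false, add_zero]
    rw [key (k + 1)]
    ring

/-- The `i`-th Fitting ideal of an arbitrary `R`-module `M`: the ideal generated, over all
finite generating families `g : R^n ↠ M`, by the `(n-i) × (n-i)` minors of matrices whose
columns are relations between the generators.  For finitely presented modules this agrees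
with the Fitting ideal computed from any presentation matrix. -/
noncomputable def fittingIdeal (R M : Type*) [CommRing R] [AddCommGroup M] [Module R M]
    (i : ℕ) : Ideal R :=
  ⨆ (n : ℕ) (g : (Fin n → R) →ₗ[R] M) (_ : Function.Surjective g),
    Ideal.span {x | ∃ (v : Fin (n - i) → Fin n → R) (c : Fin (n - i) → Fin n),
      (∀ a, g (v a) = 0) ∧ x = Matrix.det (Matrix.of fun a b => v a (c b))}

/-- Let `O` be the ring of integers of a finite extension of `ℚ_p` (a complete DVR) with
uniformizer `π`, `Λ = O[[T]]`, and `P = (T - c)` a height-one prime of `Λ` generated by a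
linear distinguished polynomial with `c ∈ πO`.  Let `Y` be a finitely generated torsion
`Λ`-module and `C ≥ 0` with `Fitt_{Λ_P, i}(Y_P) = P^C Λ_P`.  For each `n > 0` set
`P_n = (T - c - π^n)`, let `ev n : Λ → O` be the specialization with kernel `P_n`
(so `Λ/P_n ≅ O`), and define `C(n)` by `Fitt_{O,i}(Y ⊗_Λ Λ/P_n) = π^{C(n)} O`.
Then `limsup_{n → ∞} |C(n) - C·n| < ∞`, i.e. `|C(n) - C·n|` is bounded. -/
theorem fitt_specialization_asymptotic
    {O : Type*} [CommRing O] [IsDomain O] [IsDiscreteValuationRing O]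
    [IsAdicComplete (IsLocalRing.maximalIdeal O) O]
    (π : O) (hπ : Irreducible π) (c : O) (hc : c ∈ Ideal.span {π})
    (Y : Type*) [AddCommGroup Y] [Module (PowerSeries O) Y]
    [Module.Finite (PowerSeries O) Y] (htor : Module.IsTorsion (PowerSeries O) Y)
    (i : ℕ)
    [hP : (Ideal.span {PowerSeries.X - PowerSeries.C c}).IsPrime]
    (C : ℕ)
    (hC : Ideal.map (algebraMap (PowerSeries O)
          (Localization.AtPrime (Ideal.span {PowerSeries.X - PowerSeries.C c})))
          (fittingIdeal (PowerSeries O) Y i)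
        = (Ideal.map (algebraMap (PowerSeries O)
            (Localization.AtPrime (Ideal.span {PowerSeries.X - PowerSeries.C c})))
            (Ideal.span {PowerSeries.X - PowerSeries.C c})) ^ C)
    (ev : ℕ → PowerSeries O →+* O)
    (hev : ∀ n : ℕ, 0 < n → Function.Surjective (ev n) ∧
      RingHom.ker (ev n) = Ideal.span {PowerSeries.X - PowerSeries.C (c + π ^ n)})
    (Cn : ℕ → ℕ)
    (hCn : ∀ n : ℕ, 0 < n →
      Ideal.map (ev n) (fittingIdeal (PowerSeries O) Y i) = Ideal.span {π ^ Cn n}) :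
    ∃ B : ℤ, ∀ n : ℕ, 0 < n → |(Cn n : ℤ) - (C : ℤ) * n| ≤ B := by
  classical
  set P : Ideal (PowerSeries O) := Ideal.span {PowerSeries.X - PowerSeries.C c} with hPdef
  set F : Ideal (PowerSeries O) := fittingIdeal (PowerSeries O) Y i with hFdef
  have hπ0 : π ≠ 0 := hπ.ne_zero
  have hmax : IsLocalRing.maximalIdeal O = Ideal.span {π} :=
    (IsDiscreteValuationRing.irreducible_iff_uniformizer π).mp hπ
  have hne : (PowerSeries.X - PowerSeries.C c) ≠ 0 := by
    intro h
    have h1 := congrArg (PowerSeries.coeff 1) h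
    simp [PowerSeries.coeff_one_X, PowerSeries.coeff_C] at h1
  have hprime : Prime (PowerSeries.X - PowerSeries.C c) :=
    (Ideal.span_singleton_prime hne).mp hP
  have hinj : Function.Injective (algebraMap (PowerSeries O) (Localization.AtPrime P)) :=
    IsLocalization.injective _ P.primeCompl_le_nonZeroDivisors
  -- Step 1: F ≤ P ^ C
  have hFle : F ≤ P ^ C := by
    intro x hx
    have hx1 : algebraMap (PowerSeries O) (Localization.AtPrime P) x
        ∈ Ideal.map (algebraMap (PowerSeries O) (Localization.AtPrime P)) (P ^ C) := by
      rw [Ideal.map_pow, ← hC]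
      exact Ideal.mem_map_of_mem _ hx
    obtain ⟨⟨⟨p, hp⟩, ⟨s, hs⟩⟩, heq⟩ :=
      (IsLocalization.mem_map_algebraMap_iff P.primeCompl _).mp hx1
    simp only [← map_mul] at heq
    have hxs : x * s = p := hinj heq
    have hps : (PowerSeries.X - PowerSeries.C c) ^ C ∣ x * s := by
      rw [hxs, ← Ideal.mem_span_singleton, ← Ideal.span_singleton_pow]
      exact hp
    have hsd : ¬ (PowerSeries.X - PowerSeries.C c) ∣ s := by
      rw [← Ideal.mem_span_singleton]; exact hs
    rw [hPdef, Ideal.span_singleton_pow, Ideal.mem_span_singleton]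
    exact hprime.pow_dvd_of_dvd_mul_right C hsd hps
  -- Step 2: find s₀ ∉ P with (X - C c)^C * s₀ ∈ F
  have hx2 : algebraMap (PowerSeries O) (Localization.AtPrime P)
      ((PowerSeries.X - PowerSeries.C c) ^ C)
      ∈ Ideal.map (algebraMap (PowerSeries O) (Localization.AtPrime P)) F := by
    rw [hC, ← Ideal.map_pow]
    exact Ideal.mem_map_of_mem _
      (by rw [Ideal.span_singleton_pow]; exact Ideal.mem_span_singleton_self _)
  obtain ⟨⟨⟨g₀, hg₀⟩, ⟨s₀, hs₀⟩⟩, heq₀⟩ :=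
    (IsLocalization.mem_map_algebraMap_iff P.primeCompl _).mp hx2
  simp only [← map_mul] at heq₀
  have hg : (PowerSeries.X - PowerSeries.C c) ^ C * s₀ ∈ F := by
    have := hinj heq₀
    rw [this]; exact hg₀
  -- Step 3: divide s₀ by X - C c
  obtain ⟨q, b, hqb⟩ := divLin π hπ c hc s₀
  have hb0 : b ≠ 0 := by
    intro h
    refine hs₀ ?_
    show s₀ ∈ P
    rw [hPdef, Ideal.mem_span_singleton]
    exact ⟨q, by rw [hqb, h, map_zero, add_zero]⟩
  obtain ⟨k, u, hbu⟩ := IsDiscreteValuationRing.eq_unit_mul_pow_irreducible hb0 hπ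
  -- per-n facts
  have key : ∀ n : ℕ, 0 < n → n * C ≤ Cn n ∧ (k < n → Cn n ≤ n * C + k) := by
    intro n hn
    obtain ⟨hsurj, hker⟩ := hev n hn
    set e : PowerSeries O →+* O := ev n with he
    set w : O := e (PowerSeries.C π) with hw
    set a : O := c + π ^ n with ha
    have haπ : π ∣ a := dvd_add (Ideal.mem_span_singleton.mp hc) (dvd_pow_self π hn.ne')
    have hXa : e (PowerSeries.X - PowerSeries.C a) = 0 := by
      rw [← RingHom.mem_ker, hker]
      exact Ideal.mem_span_singleton_self _
    have hX : e PowerSeries.X = e (PowerSeries.C a) := by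
      rw [map_sub] at hXa; exact sub_eq_zero.mp hXa
    -- span {w} = span {π}
    have hwπ : w ∈ Ideal.span {π} := by
      by_contra hwn
      have hwu : IsUnit w := by
        by_contra hnu
        exact hwn (hmax ▸ (IsLocalRing.mem_maximalIdeal w).mpr hnu)
      obtain ⟨t, ht⟩ := hwu.exists_right_inv
      obtain ⟨z, hz⟩ := hsurj t
      have hker1 : PowerSeries.C π * z - 1 ∈ RingHom.ker e := by
        rw [RingHom.mem_ker, map_sub, map_mul, map_one, ← hw, hz, ht, sub_self]
      rw [hker] at hker1
      obtain ⟨g, hgg⟩ := Ideal.mem_span_singleton.mp hker1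
      have hcc := congrArg (PowerSeries.constantCoeff) hgg
      simp only [map_sub, map_mul, map_one, PowerSeries.constantCoeff_C,
        PowerSeries.constantCoeff_X, zero_sub, neg_mul] at hcc
      have hone : (1 : O) ∈ Ideal.span {π} := by
        have : (1 : O) = π * PowerSeries.constantCoeff z + a * PowerSeries.constantCoeff g := by
          linear_combination -hcc
        rw [this]
        exact Ideal.add_mem _ (Ideal.mem_span_singleton.mpr ⟨_, rfl⟩)
          (Ideal.mem_span_singleton.mpr (Dvd.dvd.mul_right haπ _))
      exact hπ.not_isUnit (isUnit_of_dvd_one (Ideal.mem_span_singleton.mp hone))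
    have hπw : π ∈ Ideal.span {w} := by
      obtain ⟨z, hz⟩ := hsurj π
      have hznu : ¬ IsUnit z := fun h => hπ.not_isUnit (hz ▸ h.map e)
      have hz0 : π ∣ PowerSeries.constantCoeff z := by
        rw [← Ideal.mem_span_singleton, ← hmax]
        exact (IsLocalRing.mem_maximalIdeal _).mpr
          (fun h => hznu (PowerSeries.isUnit_iff_constantCoeff.mpr h))
      obtain ⟨z1, hz1⟩ := hz0
      obtain ⟨d, hd⟩ := haπ
      have hdec := PowerSeries.sub_const_eq_X_mul_shift z
      have : π = w * (e (PowerSeries.C z1))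
          + w * (e (PowerSeries.C d) * e (PowerSeries.mk fun p => PowerSeries.coeff (p + 1) z)) := by
        rw [← hz]
        nth_rewrite 1 [show z = PowerSeries.C (PowerSeries.constantCoeff z)
          + PowerSeries.X * (PowerSeries.mk fun p => PowerSeries.coeff (p + 1) z) from by
            rw [← hdec]; ring]
        rw [map_add, map_mul, hX, hz1, hd]
        simp only [map_mul]
        rw [← hw]
        ring
      rw [this]
      exact Ideal.add_mem _ (Ideal.mem_span_singleton.mpr ⟨_, rfl⟩)
        (Ideal.mem_span_singleton.mpr ⟨_, rfl⟩)
    have hwspan : Ideal.span {w} = Ideal.span {π} := by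
      apply le_antisymm
      · rw [Ideal.span_le, Set.singleton_subset_iff]; exact hwπ
      · rw [Ideal.span_le, Set.singleton_subset_iff]; exact hπw
    have hassoc : Associated w π := Ideal.span_singleton_eq_span_singleton.mp hwspan
    have hXC : e (PowerSeries.X - PowerSeries.C c) = w ^ n := by
      rw [map_sub, hX, ← map_sub, show PowerSeries.C a - PowerSeries.C c
        = PowerSeries.C (π ^ n) from by rw [← map_sub, ha, add_sub_cancel_left],
        map_pow, map_pow, hw]
    -- lower bound
    have hlb : n * C ≤ Cn n := by
      have m1 : π ^ Cn n ∈ Ideal.map e F := by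
        rw [he, hCn n hn]; exact Ideal.mem_span_singleton_self _
      have m2 : Ideal.map e F ≤ Ideal.span {w ^ (n * C)} := by
        refine le_trans (Ideal.map_mono hFle) ?_
        rw [hPdef, Ideal.span_singleton_pow, Ideal.map_span, Set.image_singleton,
          map_pow, hXC, ← pow_mul]
      have d1 : π ^ (n * C) ∣ π ^ Cn n :=
        dvd_trans (hassoc.symm.pow_pow).dvd (Ideal.mem_span_singleton.mp (m2 m1))
      exact (pow_dvd_pow_iff hπ0 hπ.not_isUnit).mp d1
    refine ⟨hlb, fun hkn => ?_⟩
    -- upper bound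
    have hgF : e ((PowerSeries.X - PowerSeries.C c) ^ C * s₀) ∈ Ideal.span {π ^ Cn n} := by
      rw [← hCn n hn]
      exact Ideal.mem_map_of_mem _ hg
    have hU : IsUnit (e (PowerSeries.C (u : O))) := (Units.isUnit u).map (e.comp (PowerSeries.C))
    have hval : e ((PowerSeries.X - PowerSeries.C c) ^ C * s₀)
        = w ^ (n * C + n) * e q + e (PowerSeries.C (u : O)) * w ^ (n * C + k) := by
      rw [hqb, hbu]
      simp only [map_mul, map_pow, map_add, hXC, ← hw]
      ring
    by_contra hub
    push_neg at hub
    have d1 : π ^ (n * C + k + 1) ∣ w ^ (n * C + n) * e q + e (PowerSeries.C (u : O)) * w ^ (n * C + k) := by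
      rw [← hval]
      exact dvd_trans (pow_dvd_pow π (by omega)) (Ideal.mem_span_singleton.mp hgF)
    have d2 : π ^ (n * C + k + 1) ∣ w ^ (n * C + n) * e q := by
      refine Dvd.dvd.mul_right ?_ _
      exact dvd_trans (pow_dvd_pow π (by omega))
        (Associated.dvd (hassoc.symm.pow_pow (n := n * C + n)))
    have d3 : π ^ (n * C + k + 1) ∣ e (PowerSeries.C (u : O)) * w ^ (n * C + k) := by
      have := dvd_sub d1 d2
      simpa using this
    obtain ⟨ν, hν⟩ := (hassoc.symm.pow_pow (n := n * C + k))
    have d4 : π ^ (n * C + k) * π ∣ π ^ (n * C + k) * ((ν : O) * e (PowerSeries.C (u : O))) := by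
      rw [← pow_succ]
      calc π ^ (n * C + k + 1) ∣ e (PowerSeries.C (u : O)) * w ^ (n * C + k) := d3
        _ = π ^ (n * C + k) * ((ν : O) * e (PowerSeries.C (u : O))) := by
            rw [← hν]; ring
    have d5 : π ∣ (ν : O) * e (PowerSeries.C (u : O)) :=
      (mul_dvd_mul_iff_left (pow_ne_zero _ hπ0)).mp d4
    exact hπ.not_isUnit (isUnit_of_dvd_unit d5 ((Units.isUnit ν).mul hU))
  -- final assembly
  refine ⟨(k : ℤ) + ∑ j ∈ Finset.range (k + 1), |(Cn j : ℤ) - (C : ℤ) * j|, ?_⟩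
  intro n hn
  have hsumnn : (0:ℤ) ≤ ∑ j ∈ Finset.range (k + 1), |(Cn j : ℤ) - (C : ℤ) * j| :=
    Finset.sum_nonneg fun j _ => abs_nonneg _
  have hk0 : (0:ℤ) ≤ (k:ℤ) := Int.natCast_nonneg k
  by_cases hcase : n ≤ k
  · have hmem : n ∈ Finset.range (k + 1) := Finset.mem_range.mpr (by omega)
    have := Finset.single_le_sum (f := fun j => |(Cn j : ℤ) - (C : ℤ) * j|)
      (fun j _ => abs_nonneg _) hmem
    linarith
  · push_neg at hcase
    obtain ⟨hlb, hub'⟩ := key n hn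
    have hub := hub' hcase
    have hub2 : (Cn n : ℤ) ≤ (C : ℤ) * n + k := by
      have := (Nat.cast_le (α := ℤ)).mpr hub
      push_cast at this
      linarith [this, mul_comm (n : ℤ) (C : ℤ)]
    have hlb2 : (C : ℤ) * n ≤ (Cn n : ℤ) := by
      have := (Nat.cast_le (α := ℤ)).mpr hlb
      push_cast at this
      linarith [this, mul_comm (n : ℤ) (C : ℤ)]
    have : |(Cn n : ℤ) - (C : ℤ) * n| ≤ (k : ℤ) := abs_le.mpr ⟨by linarith, by linarith⟩
    linarith
end

section
/- Let Γ ≅ Z_p^2 be topologically generated by γ_1, γ_2, let O be a complete DVR with uniformizer π and residue field k, and let Λ = O[[Γ]]. Let (a_1,a_2), (b_1,b_2) ∈ Z_p^2 with a_1Z_p + a_2Z_p = Z_p and b_1Z_p + b_2Z_p = Z_p. If the ideal (γ_1^{a_1}γ_2^{a_2} − 1, π) of Λ equals (γ_1^{b_1}γ_2^{b_2} − 1, π), then there exists e ∈ Z_p^× with (b_1, b_2) = (e·a_1, e·a_2). -/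
/-- `g` is the two-variable "gamma-power" function of the Iwasawa algebra
`Λ = O[[Γ]] ≅ O[[T₁,T₂]]` attached to `Γ ≅ ℤ_p²` with topological generators
`γ₁ = 1 + T₁` and `γ₂ = 1 + T₂`: namely `g a b = γ₁^a γ₂^b` for `a b : ℤ_p`.  The map
`(a,b) ↦ γ₁^a γ₂^b` is the unique multiplicative, continuous extension of
`(n₁,n₂) ↦ (1+T₁)^{n₁} (1+T₂)^{n₂}` from ℕ² to ℤ_p²; continuity is expressed through the
standard congruences modulo the ideals `((1+Tᵢ)^{p^m} - 1)`. -/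
def IsGammaPow (p : ℕ) [Fact p.Prime] {O : Type*} [CommRing O]
    (g : ℤ_[p] → ℤ_[p] → MvPowerSeries (Fin 2) O) : Prop :=
  g 0 0 = 1 ∧
  (∀ a b a' b' : ℤ_[p], g (a + a') (b + b') = g a b * g a' b') ∧
  g 1 0 = 1 + MvPowerSeries.X 0 ∧
  g 0 1 = 1 + MvPowerSeries.X 1 ∧
  ∀ (a b : ℤ_[p]) (m n₁ n₂ : ℕ),
    (n₁ : ℤ_[p]) - a ∈ Ideal.span {(p : ℤ_[p]) ^ m} →
    (n₂ : ℤ_[p]) - b ∈ Ideal.span {(p : ℤ_[p]) ^ m} →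
    g a b - (1 + MvPowerSeries.X 0) ^ n₁ * (1 + MvPowerSeries.X 1) ^ n₂ ∈
      Ideal.span {(1 + MvPowerSeries.X 0) ^ p ^ m - 1,
        (1 + MvPowerSeries.X 1) ^ p ^ m - 1}

open MvPowerSeries Finset

section Eval
variable {R S : Type*} [CommRing R] [CommRing S] (φ : R →+* S)
  (w : Fin 2 → S) (q : ℕ)

/-- the bound finsupp `N = (q-1, q-1)` -/
noncomputable def bnd (q : ℕ) : Fin 2 →₀ ℕ := Finsupp.equivFunOnFinite.symm (fun _ => q - 1)

lemma bnd_apply (i : Fin 2) : bnd q i = q - 1 := rfl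

/-- monomial evaluation -/
def mev (d : Fin 2 →₀ ℕ) : S := w 0 ^ d 0 * w 1 ^ d 1

variable {w q}

lemma mev_add (d e : Fin 2 →₀ ℕ) : mev w (d + e) = mev w d * mev w e := by
  simp [mev, Finsupp.add_apply, pow_add]; ring

lemma mev_eq_zero (hw : ∀ i, w i ^ q = 0) {d : Fin 2 →₀ ℕ} (hq : 1 ≤ q)
    (hd : ¬ d ≤ bnd q) : mev w d = 0 := by
  rw [Finsupp.le_def] at hd
  push_neg at hd
  obtain ⟨i, hi⟩ := hd
  have hqi : q ≤ d i := by
    have := bnd_apply (q := q) i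
    omega
  have h0 : w i ^ d i = 0 := by
    rw [show d i = q + (d i - q) by omega, pow_add, hw i, zero_mul]
  fin_cases i
  · simp only [Fin.isValue, mev]
    norm_num at h0
    rw [h0, zero_mul]
  · simp only [Fin.isValue, mev]
    norm_num at h0
    rw [h0, mul_zero]

end Eval

section Eval2
variable {R S : Type*} [CommRing R] [CommRing S] (φ : R →+* S)
  (w : Fin 2 → S) (q : ℕ)

noncomputable def evalFun (f : MvPowerSeries (Fin 2) R) : S :=
  ∑ d ∈ Finset.Iic (bnd q), φ (MvPowerSeries.coeff d f) * mev w d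

variable {φ w q}

lemma evalFun_mul (hw : ∀ i, w i ^ q = 0) (hq : 1 ≤ q) (f g : MvPowerSeries (Fin 2) R) :
    evalFun φ w q (f * g) = evalFun φ w q f * evalFun φ w q g := by
  classical
  unfold evalFun
  rw [Finset.sum_mul_sum]
  have hR : ∀ d e : Fin 2 →₀ ℕ,
      (φ (MvPowerSeries.coeff d f) * mev w d) * (φ (MvPowerSeries.coeff e g) * mev w e)
      = φ (MvPowerSeries.coeff d f) * φ (MvPowerSeries.coeff e g) * (mev w d * mev w e) := by
    intro d e; ring
  simp_rw [hR]
  have hL : ∀ d ∈ Finset.Iic (bnd q),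
      φ (MvPowerSeries.coeff d (f * g)) * mev w d
      = ∑ pr ∈ Finset.HasAntidiagonal.antidiagonal d,
          φ (MvPowerSeries.coeff pr.1 f) * φ (MvPowerSeries.coeff pr.2 g)
            * (mev w pr.1 * mev w pr.2) := by
    intro d hd
    rw [MvPowerSeries.coeff_mul, map_sum, Finset.sum_mul]
    refine Finset.sum_congr rfl ?_
    intro pr hpr
    rw [Finset.HasAntidiagonal.mem_antidiagonal] at hpr
    rw [map_mul, ← mev_add, hpr]
  rw [Finset.sum_congr rfl hL]
  rw [Finset.sum_sigma' (Finset.Iic (bnd q)) (fun d => Finset.HasAntidiagonal.antidiagonal d)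
    (fun _ (pr : (Fin 2 →₀ ℕ) × (Fin 2 →₀ ℕ)) => φ (MvPowerSeries.coeff pr.1 f) * φ (MvPowerSeries.coeff pr.2 g)
      * (mev w pr.1 * mev w pr.2))]
  rw [← Finset.sum_product' (s := Finset.Iic (bnd q)) (t := Finset.Iic (bnd q))
    (f := fun d e => φ (MvPowerSeries.coeff d f) * φ (MvPowerSeries.coeff e g)
      * (mev w d * mev w e))]
  rw [← Finset.sum_filter_of_ne (p := fun pr : (Fin 2 →₀ ℕ) × (Fin 2 →₀ ℕ) => pr.1 + pr.2 ≤ bnd q)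
    (by
      intro pr _ hne
      by_contra hle
      apply hne
      rw [← mev_add] at *
      rw [mev_eq_zero hw hq hle, mul_zero])]
  refine Finset.sum_nbij' (fun x => x.2) (fun pr => ⟨pr.1 + pr.2, pr⟩) ?_ ?_ ?_ ?_ ?_
  · rintro ⟨d, pr⟩ hx
    rw [Finset.mem_sigma] at hx
    obtain ⟨hd, hpr⟩ := hx
    rw [Finset.HasAntidiagonal.mem_antidiagonal] at hpr
    rw [Finset.mem_Iic] at hd
    simp only [Finset.mem_filter, Finset.mem_product, Finset.mem_Iic]
    refine ⟨⟨?_, ?_⟩, ?_⟩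
    · exact le_trans (le_self_add.trans_eq hpr) hd
    · exact le_trans (le_add_self.trans_eq hpr) hd
    · exact hpr.le.trans hd
  · intro pr hpr
    simp only [Finset.mem_filter, Finset.mem_product, Finset.mem_Iic] at hpr
    rw [Finset.mem_sigma, Finset.mem_Iic, Finset.HasAntidiagonal.mem_antidiagonal]
    exact ⟨hpr.2, rfl⟩
  · rintro ⟨d, pr⟩ hx
    rw [Finset.mem_sigma, Finset.HasAntidiagonal.mem_antidiagonal] at hx
    exact Sigma.ext hx.2 (heq_of_eq rfl)
  · intro pr _; rfl
  · rintro ⟨d, pr⟩ _; rfl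

end Eval2

section Eval3
variable {R S : Type*} [CommRing R] [CommRing S] {φ : R →+* S}
  {w : Fin 2 → S} {q : ℕ}

lemma evalFun_C (r : R) : evalFun φ w q (MvPowerSeries.C (σ := Fin 2) (R := R) r) = φ r := by
  classical
  unfold evalFun
  rw [Finset.sum_eq_single (0 : Fin 2 →₀ ℕ)]
  · simp [mev, MvPowerSeries.coeff_C]
  · intro d _ hd
    simp [MvPowerSeries.coeff_C, hd]
  · intro h0
    exact absurd (Finset.mem_Iic.mpr zero_le) h0

lemma evalFun_one : evalFun φ w q (1 : MvPowerSeries (Fin 2) R) = 1 := by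
  have := evalFun_C (φ := φ) (w := w) (q := q) (1 : R)
  rwa [map_one, map_one] at this

lemma evalFun_add (f g : MvPowerSeries (Fin 2) R) :
    evalFun φ w q (f + g) = evalFun φ w q f + evalFun φ w q g := by
  unfold evalFun
  rw [← Finset.sum_add_distrib]
  refine Finset.sum_congr rfl fun d _ => ?_
  rw [map_add, map_add, add_mul]

lemma evalFun_X (hq : 2 ≤ q) (i : Fin 2) :
    evalFun φ w q (MvPowerSeries.X i) = w i := by
  classical
  unfold evalFun
  rw [Finset.sum_eq_single (Finsupp.single i 1)]
  · rw [MvPowerSeries.coeff_X, if_pos rfl, map_one, one_mul]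
    fin_cases i <;> simp [mev, Finsupp.single_apply]
  · intro d _ hd
    rw [MvPowerSeries.coeff_X, if_neg (by exact fun h => hd h), map_zero, zero_mul]
  · intro h0
    exfalso
    apply h0
    rw [Finset.mem_Iic, Finsupp.le_def]
    intro j
    have : (Finsupp.single i 1) j ≤ 1 := by
      rw [Finsupp.single_apply]
      split <;> omega
    have hb : bnd q j = q - 1 := rfl
    omega

/-- The evaluation ring hom at nilpotent points. -/
noncomputable def evalHom (φ : R →+* S) (w : Fin 2 → S) (q : ℕ) (hq : 2 ≤ q)
    (hw : ∀ i, w i ^ q = 0) : MvPowerSeries (Fin 2) R →+* S where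
  toFun := evalFun φ w q
  map_one' := evalFun_one
  map_mul' := evalFun_mul hw (by omega)
  map_zero' := by
    have := evalFun_C (φ := φ) (w := w) (q := q) (0 : R)
    rwa [map_zero, map_zero] at this
  map_add' := evalFun_add

lemma evalHom_C (hq : 2 ≤ q) (hw : ∀ i, w i ^ q = 0) (r : R) :
    evalHom φ w q hq hw (MvPowerSeries.C (σ := Fin 2) (R := R) r) = φ r := evalFun_C r

lemma evalHom_X (hq : 2 ≤ q) (hw : ∀ i, w i ^ q = 0) (i : Fin 2) :
    evalHom φ w q hq hw (MvPowerSeries.X i) = w i := evalFun_X hq i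

end Eval3

open MvPowerSeries in
lemma det_mem_aux
    (p : ℕ) [Fact p.Prime] {O : Type*} [CommRing O]
    (π : O) (hπ : ¬ IsUnit π) (hp : (p : O) ∈ Ideal.span {π})
    (g : ℤ_[p] → ℤ_[p] → MvPowerSeries (Fin 2) O) (hg : IsGammaPow p g)
    (a₁ a₂ b₁ b₂ : ℤ_[p])
    (hmem : g b₁ b₂ - 1 ∈ Ideal.span {g a₁ a₂ - 1, MvPowerSeries.C (σ := Fin 2) (R := O) π})
    (m : ℕ) :
    a₁ * b₂ - a₂ * b₁ ∈ Ideal.span {(p : ℤ_[p]) ^ m} := by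
  classical
  rcases Nat.eq_zero_or_pos m with hm | hm
  · subst hm
    simp [Ideal.span_singleton_one]
  have hpp : p.Prime := Fact.out
  have hq2 : 2 ≤ p ^ m := le_trans hpp.two_le (Nat.le_self_pow (by omega) p)
  haveI : NeZero (p ^ m) := ⟨by positivity⟩
  let k := O ⧸ Ideal.span {π}
  haveI hknt : Nontrivial k := Ideal.Quotient.nontrivial_iff.mpr (by
    rw [Ne, Ideal.span_singleton_eq_top]; exact hπ)
  let G := ZMod (p ^ m) × ZMod (p ^ m)
  let α : G := (PadicInt.toZModPow m a₁, PadicInt.toZModPow m a₂)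
  let β : G := (PadicInt.toZModPow m b₁, PadicInt.toZModPow m b₂)
  let H := AddSubgroup.zmultiples α
  let Q := G ⧸ H
  let S := AddMonoidAlgebra k Q
  let el : G → S := fun x => AddMonoidAlgebra.single ((x : Q)) (1 : k)
  have hel_mul : ∀ x y : G, el x * el y = el (x + y) := by
    intro x y
    show AddMonoidAlgebra.single _ _ * AddMonoidAlgebra.single _ _ = _
    rw [AddMonoidAlgebra.single_mul_single, one_mul]
    congr 1
  have hel_pow : ∀ (x : G) (n : ℕ), el x ^ n = el (n • x) := by
    intro x n
    show AddMonoidAlgebra.single _ _ ^ n = _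
    rw [AddMonoidAlgebra.single_pow, one_pow]
    congr 1
  have hel_zero : el 0 = 1 := by
    show AddMonoidAlgebra.single _ _ = _
    rw [AddMonoidAlgebra.one_def]
    congr 1
  have hsm : ∀ x : G, (p ^ m) • x = 0 := by
    intro x
    have h1 : ∀ y : ZMod (p ^ m), (p ^ m) • y = 0 := by
      intro y
      rw [nsmul_eq_mul, ZMod.natCast_self, zero_mul]
    exact Prod.ext (h1 x.1) (h1 x.2)
  have hel_q : ∀ x : G, el x ^ p ^ m = 1 := by
    intro x
    rw [hel_pow, hsm, hel_zero]
  haveI : CharP S p := by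
    refine (CharP.charP_iff_prime_eq_zero hpp).mpr ?_
    have hk0 : (p : k) = 0 := by
      show ((p : ℕ) : O ⧸ Ideal.span {π}) = 0
      rw [← map_natCast (Ideal.Quotient.mk (Ideal.span {π})), Ideal.Quotient.eq_zero_iff_mem]
      exact hp
    calc (p : S) = AddMonoidAlgebra.singleZeroRingHom (p : k) := (map_natCast _ p).symm
    _ = 0 := by rw [hk0, map_zero]
  let w : Fin 2 → S := ![el (1, 0) - 1, el (0, 1) - 1]
  have hw : ∀ i, w i ^ p ^ m = 0 := by
    have key : ∀ x : G, (el x - 1) ^ p ^ m = 0 := by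
      intro x
      rw [sub_pow_char_pow, hel_q, one_pow, sub_self]
    intro i
    fin_cases i
    · exact key _
    · exact key _
  let φ : O →+* S := AddMonoidAlgebra.singleZeroRingHom.comp (Ideal.Quotient.mk (Ideal.span {π}))
  let Φ : MvPowerSeries (Fin 2) O →+* S := evalHom φ w (p ^ m) hq2 hw
  have hΦX0 : Φ (1 + X 0) = el (1, 0) := by
    rw [map_add, map_one]
    show 1 + evalHom φ w (p ^ m) hq2 hw (X 0) = _
    rw [evalHom_X]
    show 1 + (el (1, 0) - 1) = el (1, 0)
    ring
  have hΦX1 : Φ (1 + X 1) = el (0, 1) := by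
    rw [map_add, map_one]
    show 1 + evalHom φ w (p ^ m) hq2 hw (X 1) = _
    rw [evalHom_X]
    show 1 + (el (0, 1) - 1) = el (0, 1)
    ring
  have hmon : ∀ n₁ n₂ : ℕ, Φ ((1 + X 0) ^ n₁ * (1 + X 1) ^ n₂)
      = el ((n₁ : ZMod (p ^ m)), (n₂ : ZMod (p ^ m))) := by
    intro n₁ n₂
    rw [map_mul, map_pow, map_pow, hΦX0, hΦX1, hel_pow, hel_pow, hel_mul]
    congr 1
    refine Prod.ext ?_ ?_
    · rw [Prod.fst_add, Prod.smul_fst, Prod.smul_fst, nsmul_eq_mul, nsmul_eq_mul,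
        mul_one, mul_zero, add_zero]
    · rw [Prod.snd_add, Prod.smul_snd, Prod.smul_snd, nsmul_eq_mul, nsmul_eq_mul,
        mul_one, mul_zero, zero_add]
  have hu0 : Φ ((1 + X 0) ^ p ^ m - 1) = 0 := by
    rw [map_sub, map_pow, map_one, hΦX0, hel_q, sub_self]
  have hu1 : Φ ((1 + X 1) ^ p ^ m - 1) = 0 := by
    rw [map_sub, map_pow, map_one, hΦX1, hel_q, sub_self]
  have hspan : ∀ ξ ∈ Ideal.span {(1 + X 0) ^ p ^ m - 1, (1 + X 1) ^ p ^ m - 1}, Φ ξ = 0 := by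
    intro ξ hξ
    obtain ⟨c, d, hcd⟩ := Ideal.mem_span_pair.mp hξ
    rw [← hcd, map_add, map_mul, map_mul, hu0, hu1, mul_zero, mul_zero, add_zero]
  have hc : ∀ x : ℤ_[p], (((PadicInt.toZModPow m x).val : ℤ_[p])) - x
      ∈ Ideal.span {(p : ℤ_[p]) ^ m} := by
    intro x
    rw [← PadicInt.ker_toZModPow, RingHom.mem_ker, map_sub, map_natCast, ZMod.natCast_val,
      ZMod.cast_id, sub_self]
  have hgval : ∀ x y : ℤ_[p], Φ (g x y)
      = el (PadicInt.toZModPow m x, PadicInt.toZModPow m y) := by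
    intro x y
    have hcong := hg.2.2.2.2 x y m (PadicInt.toZModPow m x).val (PadicInt.toZModPow m y).val
      (hc x) (hc y)
    have h0 := hspan _ hcong
    rw [map_sub, sub_eq_zero] at h0
    rw [h0, hmon]
    congr 1
    refine Prod.ext ?_ ?_ <;> simp [ZMod.natCast_val, ZMod.cast_id]
  have hΦga : Φ (g a₁ a₂ - 1) = 0 := by
    rw [map_sub, map_one, hgval, sub_eq_zero]
    show el α = 1
    have : ((α : Q)) = 0 := (QuotientAddGroup.eq_zero_iff α).mpr (AddSubgroup.mem_zmultiples α)
    show AddMonoidAlgebra.single _ _ = _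
    rw [this, AddMonoidAlgebra.one_def]
  have hβ1 : el β = 1 := by
    obtain ⟨c, d, hcd⟩ := Ideal.mem_span_pair.mp hmem
    have := congrArg Φ hcd
    rw [map_add, map_mul, map_mul, hΦga, mul_zero, map_sub, map_one, hgval] at this
    have hCπ : Φ (MvPowerSeries.C (σ := Fin 2) (R := O) π) = 0 := by
      show evalHom φ w (p ^ m) hq2 hw (MvPowerSeries.C (σ := Fin 2) (R := O) π) = 0
      rw [evalHom_C]
      show AddMonoidAlgebra.singleZeroRingHom (Ideal.Quotient.mk _ π) = 0
      rw [Ideal.Quotient.eq_zero_iff_mem.mpr (Ideal.mem_span_singleton_self π), map_zero]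
    rw [hCπ, mul_zero, add_zero] at this
    exact sub_eq_zero.mp this.symm
  have hβH : β ∈ H := by
    have : ((β : Q)) = (0 : Q) := by
      have h1 := hβ1
      show _ = _
      have h2 : AddMonoidAlgebra.single ((β : Q)) (1 : k)
          = AddMonoidAlgebra.single (0 : Q) (1 : k) := by
        rw [← AddMonoidAlgebra.one_def]; exact h1
      rcases AddMonoidAlgebra.single_inj.mp h2 with h | h
      · exact h.1
      · exact absurd h.1 one_ne_zero
    exact (QuotientAddGroup.eq_zero_iff β).mp this
  obtain ⟨t, ht⟩ := AddSubgroup.mem_zmultiples_iff.mp hβH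
  rw [← PadicInt.ker_toZModPow, RingHom.mem_ker, map_sub, map_mul, map_mul]
  have ht1 : PadicInt.toZModPow m b₁ = (t : ZMod (p ^ m)) * PadicInt.toZModPow m a₁ := by
    have := congrArg Prod.fst ht
    change t • PadicInt.toZModPow m a₁ = PadicInt.toZModPow m b₁ at this
    simpa [zsmul_eq_mul] using this.symm
  have ht2 : PadicInt.toZModPow m b₂ = (t : ZMod (p ^ m)) * PadicInt.toZModPow m a₂ := by
    have := congrArg Prod.snd ht
    change t • PadicInt.toZModPow m a₂ = PadicInt.toZModPow m b₂ at this
    simpa [zsmul_eq_mul] using this.symm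
  rw [ht1, ht2]
  ring


/-- Let `Γ ≅ ℤ_p²` be topologically generated by `γ₁, γ₂`, let `O` be a complete DVR with
uniformizer `π` (and residue characteristic `p`), and let `Λ = O[[Γ]]`.  Let
`(a₁,a₂), (b₁,b₂) ∈ ℤ_p²` with `a₁ℤ_p + a₂ℤ_p = ℤ_p` and `b₁ℤ_p + b₂ℤ_p = ℤ_p`.
If the ideal `(γ₁^{a₁}γ₂^{a₂} - 1, π)` of `Λ` equals `(γ₁^{b₁}γ₂^{b₂} - 1, π)`, then there
exists `e ∈ ℤ_p^×` with `(b₁, b₂) = (e·a₁, e·a₂)`. -/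
theorem exists_unit_of_ideal_eq
    (p : ℕ) [Fact p.Prime] {O : Type*} [CommRing O] [IsDomain O]
    [IsDiscreteValuationRing O] [IsAdicComplete (IsLocalRing.maximalIdeal O) O]
    (π : O) (hπ : Irreducible π) (hp : (p : O) ∈ Ideal.span {π})
    (g : ℤ_[p] → ℤ_[p] → MvPowerSeries (Fin 2) O) (hg : IsGammaPow p g)
    (a₁ a₂ b₁ b₂ : ℤ_[p])
    (ha : Ideal.span {a₁, a₂} = ⊤) (hb : Ideal.span {b₁, b₂} = ⊤)
    (h : Ideal.span {g a₁ a₂ - 1, MvPowerSeries.C (σ := Fin 2) (R := O) π}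
       = Ideal.span {g b₁ b₂ - 1, MvPowerSeries.C (σ := Fin 2) (R := O) π}) :
    ∃ e : ℤ_[p]ˣ, b₁ = (e : ℤ_[p]) * a₁ ∧ b₂ = (e : ℤ_[p]) * a₂ := by
  have hpp : p.Prime := Fact.out
  have hmem : g b₁ b₂ - 1 ∈ Ideal.span {g a₁ a₂ - 1, MvPowerSeries.C (σ := Fin 2) (R := O) π} := by
    rw [h]
    exact Ideal.subset_span (Set.mem_insert _ _)
  have hall := det_mem_aux p π hπ.not_isUnit hp g hg a₁ a₂ b₁ b₂ hmem
  have hdet : a₁ * b₂ - a₂ * b₁ = 0 := by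
    by_contra hne
    have hpos : 0 < ‖a₁ * b₂ - a₂ * b₁‖ := by
      rw [norm_pos_iff]
      exact hne
    have hlt1 : ((p : ℝ))⁻¹ < 1 := by
      rw [inv_lt_one_iff₀]
      right
      exact_mod_cast hpp.one_lt
    obtain ⟨n, hn⟩ := exists_pow_lt_of_lt_one hpos hlt1
    have hle := (PadicInt.norm_le_pow_iff_mem_span_pow _ n).mpr (hall n)
    have heq : (p : ℝ) ^ (-(n : ℤ)) = ((p : ℝ))⁻¹ ^ n := by
      rw [zpow_neg, inv_pow, zpow_natCast]
    rw [heq] at hle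
    linarith
  have h1 : a₁ * b₂ = a₂ * b₁ := sub_eq_zero.mp hdet
  have hone : (1 : ℤ_[p]) ∈ Ideal.span {b₁, b₂} := by rw [hb]; trivial
  obtain ⟨x, y, hxy⟩ := Ideal.mem_span_pair.mp hone
  have hAB : IsUnit a₁ ∨ IsUnit a₂ := by
    by_contra hcon
    push_neg at hcon
    have hle : Ideal.span {a₁, a₂} ≤ IsLocalRing.maximalIdeal ℤ_[p] := by
      rw [Ideal.span_le]
      rintro z hz
      rcases hz with hz | hz
      · rw [hz]; exact hcon.1
      · rw [Set.mem_singleton_iff.mp hz]; exact hcon.2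
    rw [ha] at hle
    exact (IsLocalRing.maximalIdeal.isMaximal ℤ_[p]).ne_top (top_le_iff.mp hle)
  rcases hAB with hA | hA
  · obtain ⟨u, hu⟩ := hA
    have ha₁ : a₁ ≠ 0 := hu ▸ u.ne_zero
    have huu : (↑u : ℤ_[p]) * ↑u⁻¹ = 1 := u.mul_inv
    have he1 : b₁ = (b₁ * ↑u⁻¹) * a₁ := by
      rw [← hu]
      linear_combination (-b₁) * huu
    have he2 : b₂ = (b₁ * ↑u⁻¹) * a₂ := by
      apply mul_left_cancel₀ ha₁
      rw [h1, ← hu]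
      linear_combination (-(a₂ * b₁)) * huu
    have hunit : IsUnit (b₁ * ↑u⁻¹) := by
      apply IsUnit.of_mul_eq_one (x * a₁ + y * a₂)
      linear_combination hxy - x * he1 - y * he2
    obtain ⟨e, he⟩ := hunit
    exact ⟨e, by rw [he]; exact he1, by rw [he]; exact he2⟩
  · obtain ⟨u, hu⟩ := hA
    have ha₂ : a₂ ≠ 0 := hu ▸ u.ne_zero
    have huu : (↑u : ℤ_[p]) * ↑u⁻¹ = 1 := u.mul_inv
    have he2 : b₂ = (b₂ * ↑u⁻¹) * a₂ := by
      rw [← hu]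
      linear_combination (-b₂) * huu
    have he1 : b₁ = (b₂ * ↑u⁻¹) * a₁ := by
      apply mul_left_cancel₀ ha₂
      rw [← h1, ← hu]
      linear_combination (-(a₁ * b₂)) * huu
    have hunit : IsUnit (b₂ * ↑u⁻¹) := by
      apply IsUnit.of_mul_eq_one (x * a₁ + y * a₂)
      linear_combination hxy - x * he1 - y * he2
    obtain ⟨e, he⟩ := hunit
    exact ⟨e, by rw [he]; exact he1, by rw [he]; exact he2⟩
end

section
/- Let G be a finite abelian group, p a prime, R = Z_p[G], and X a Z_p[G]-module that is torsion-free as a Z_p-module. For ν > 0 set X̄_ν = X ⊗_Z Z/p^ν Z and R_ν = R/p^ν R. Then the reduction map Hom_R(X, R) → Hom_{R_ν}(X̄_ν, R_ν) is surjective, and it induces an R_ν-isomorphism Hom_R(X, R) ⊗_Z Z/p^ν Z ≅ Hom_{R_ν}(X̄_ν, R_ν). -/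
open PadicInt IsLocalRing

variable {p : ℕ} [Fact p.Prime]

lemma padic_pow_dvd_iff_norm (t : ℤ_[p]) (m : ℕ) :
    (p:ℤ_[p])^m ∣ t ↔ ‖t‖ ≤ (p:ℝ)^(-(m:ℤ)) := by
  rw [PadicInt.norm_le_pow_iff_mem_span_pow, Ideal.mem_span_singleton]

lemma padic_zero_of_dvd_pow (t : ℤ_[p]) (h : ∀ m : ℕ, (p:ℤ_[p])^m ∣ t) : t = 0 := by
  by_contra ht
  have h1 : (0:ℝ) < ‖t‖ := by simpa [norm_pos_iff] using ht
  obtain ⟨m, hm⟩ := PadicInt.exists_pow_neg_lt p h1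
  have := (padic_pow_dvd_iff_norm t m).1 (h m)
  linarith

lemma padic_limit (c : ℕ → ℤ_[p]) (h : ∀ m n : ℕ, m ≤ n → (p:ℤ_[p])^m ∣ c n - c m) :
    ∃ t : ℤ_[p], ∀ n, (p:ℤ_[p])^n ∣ t - c n := by
  obtain ⟨t, ht⟩ := IsPrecomplete.prec (IsAdicComplete.toIsPrecomplete (I := maximalIdeal ℤ_[p]))
    (f := c) (by
      intro m n hmn
      rw [SModEq.sub_mem]
      simp only [maximalIdeal_eq_span_p, Ideal.span_singleton_pow, smul_eq_mul, Ideal.mul_top,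
        Ideal.mem_span_singleton]
      exact (dvd_sub_comm).1 (h m n hmn))
  refine ⟨t, fun n => ?_⟩
  have := ht n
  rw [SModEq.sub_mem] at this
  simp only [maximalIdeal_eq_span_p, Ideal.span_singleton_pow, smul_eq_mul, Ideal.mul_top,
    Ideal.mem_span_singleton] at this
  exact (dvd_sub_comm).1 this

lemma padic_unit_decomp (c : ℤ_[p]) (hc : c ≠ 0) :
    ∃ (i : ℕ) (u : ℤ_[p]), IsUnit u ∧ c = (p:ℤ_[p])^i * u := by
  refine ⟨c.valuation, (unitCoeff hc : ℤ_[p]), (unitCoeff hc).isUnit, ?_⟩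
  rw [mul_comm]; exact unitCoeff_spec hc

lemma padic_scaled_ball (c : ℤ_[p]) (k : ℕ) :
    ∃ e : ℕ, ∀ δ : ℤ_[p], ((p:ℤ_[p])^k ∣ c * δ ↔ (p:ℤ_[p])^e ∣ δ) := by
  rcases eq_or_ne c 0 with rfl | hc
  · exact ⟨0, fun δ => by simp⟩
  obtain ⟨i, u, hu, rfl⟩ := padic_unit_decomp c hc
  rcases le_or_gt i k with hik | hik
  · refine ⟨k - i, fun δ => ?_⟩
    have h1 : (p:ℤ_[p])^i * u * δ = u * ((p:ℤ_[p])^i * δ) := by ring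
    have hpi : ((p:ℤ_[p])^i) ≠ 0 :=
      pow_ne_zero i (Nat.cast_ne_zero.2 (Fact.out (p := p.Prime)).ne_zero)
    have h2 : (p:ℤ_[p])^k = (p:ℤ_[p])^i * (p:ℤ_[p])^(k-i) := by
      rw [← pow_add]; congr 1; omega
    rw [h1, IsUnit.dvd_mul_left hu, h2]
    exact mul_dvd_mul_iff_left hpi
  · refine ⟨0, fun δ => ?_⟩
    simp only [pow_zero, one_dvd, iff_true]
    exact Dvd.dvd.mul_right (Dvd.dvd.mul_right (pow_dvd_pow _ hik.le) u) δ

lemma padic_balls {ι : Sort*} (a : ι → ℤ_[p]) (e : ι → ℕ)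
    (hpair : ∀ i j, ∃ t, (p:ℤ_[p])^(e i) ∣ t - a i ∧ (p:ℤ_[p])^(e j) ∣ t - a j) :
    ∃ t : ℤ_[p], ∀ i, (p:ℤ_[p])^(e i) ∣ t - a i := by
  have hcent : ∀ i j, (p:ℤ_[p])^(min (e i) (e j)) ∣ a j - a i := by
    intro i j
    obtain ⟨t, h1, h2⟩ := hpair i j
    have : a j - a i = (t - a i) - (t - a j) := by ring
    rw [this]
    exact dvd_sub ((pow_dvd_pow _ (min_le_left _ _)).trans h1)
      ((pow_dvd_pow _ (min_le_right _ _)).trans h2)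
  cases isEmpty_or_nonempty ι with
  | inl h => exact ⟨0, fun i => absurd (Nonempty.intro i) (by simpa using h)⟩
  | inr h =>
    by_cases hb : ∃ i₀, ∀ i, e i ≤ e i₀
    · obtain ⟨i₀, hi₀⟩ := hb
      refine ⟨a i₀, fun i => ?_⟩
      have := hcent i i₀
      rwa [min_eq_left (hi₀ i)] at this
    · push_neg at hb
      have hun : ∀ n : ℕ, ∃ i, n ≤ e i := by
        intro n
        induction n with
        | zero => exact ⟨Classical.arbitrary ι, Nat.zero_le _⟩
        | succ n ih =>
          obtain ⟨i, hi⟩ := ih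
          obtain ⟨i', hi'⟩ := hb i
          exact ⟨i', by omega⟩
      choose j hj using hun
      obtain ⟨t, ht⟩ := padic_limit (fun n => a (j n)) (by
        intro m n hmn
        show (p:ℤ_[p])^m ∣ a (j n) - a (j m)
        have h0 := hcent (j m) (j n)
        have hm : m ≤ min (e (j m)) (e (j n)) := le_min (hj m) (hmn.trans (hj n))
        exact (pow_dvd_pow _ hm).trans h0)
      refine ⟨t, fun i => ?_⟩
      have h1 : (p:ℤ_[p])^(e i) ∣ t - a (j (e i)) := ht (e i)
      have h2 : (p:ℤ_[p])^(e i) ∣ a i - a (j (e i)) := by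
        have h3 := hcent (j (e i)) i
        exact (pow_dvd_pow _ (le_min (hj (e i)) (le_refl _))).trans h3
      have : t - a i = (t - a (j (e i))) - (a i - a (j (e i))) := by ring
      rw [this]; exact dvd_sub h1 h2

lemma padic_constraints {ι : Sort*} (c r : ι → ℤ_[p]) (k : ι → ℕ)
    (hpair : ∀ i j, ∃ t, (p:ℤ_[p])^(k i) ∣ c i * t - r i ∧ (p:ℤ_[p])^(k j) ∣ c j * t - r j) :
    ∃ t : ℤ_[p], ∀ i, (p:ℤ_[p])^(k i) ∣ c i * t - r i := by
  choose e he using fun i => padic_scaled_ball (c i) (k i)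
  have hsol : ∀ i, ∃ t, (p:ℤ_[p])^(k i) ∣ c i * t - r i := fun i => by
    obtain ⟨t, h, _⟩ := hpair i i; exact ⟨t, h⟩
  choose t0 ht0 using hsol
  have hequiv : ∀ i t, ((p:ℤ_[p])^(k i) ∣ c i * t - r i ↔ (p:ℤ_[p])^(e i) ∣ t - t0 i) := by
    intro i t
    rw [← he i]
    constructor
    · intro h
      have : c i * (t - t0 i) = (c i * t - r i) - (c i * t0 i - r i) := by ring
      rw [this]; exact dvd_sub h (ht0 i)
    · intro h
      have : c i * t - r i = c i * (t - t0 i) + (c i * t0 i - r i) := by ring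
      rw [this]; exact dvd_add h (ht0 i)
  obtain ⟨t, ht⟩ := padic_balls t0 e (by
    intro i j
    obtain ⟨s, h1, h2⟩ := hpair i j
    exact ⟨s, (hequiv i s).1 h1, (hequiv j s).1 h2⟩)
  exact ⟨t, fun i => (hequiv i t).2 (ht i)⟩

variable (p) in
/-- A set-theoretic lift of `ZMod (p^ν)` into `ℤ_[p]`. -/
noncomputable def PadL (ν : ℕ) (a : ZMod (p^ν)) : ℤ_[p] := ((ZMod.val a : ℕ) : ℤ_[p])

lemma NeZero_pow_p (ν : ℕ) : NeZero (p^ν) :=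
  ⟨pow_ne_zero _ (Fact.out (p := p.Prime)).ne_zero⟩

lemma PadL_pi (ν : ℕ) (a : ZMod (p^ν)) : PadicInt.toZModPow ν (PadL p ν a) = a := by
  haveI := NeZero_pow_p (p := p) ν
  rw [PadL, map_natCast]
  exact ZMod.natCast_rightInverse a

lemma PadL_zero (ν : ℕ) : PadL p ν 0 = 0 := by
  haveI := NeZero_pow_p (p := p) ν
  simp [PadL]

lemma pi_ker (ν : ℕ) (a : ℤ_[p]) : PadicInt.toZModPow ν a = 0 ↔ (p:ℤ_[p])^ν ∣ a := by
  have h1 : a ∈ RingHom.ker (PadicInt.toZModPow (p := p) ν) ↔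
      a ∈ Ideal.span {(p : ℤ_[p]) ^ ν} := by rw [PadicInt.ker_toZModPow]
  rw [RingHom.mem_ker, Ideal.mem_span_singleton] at h1
  exact h1

lemma pi_diff (ν : ℕ) (a b : ZMod (p^ν)) (h : a = b) : (p:ℤ_[p])^ν ∣ PadL p ν a - PadL p ν b := by
  rw [← pi_ker, map_sub, PadL_pi, PadL_pi, h, sub_self]

section Good
variable {ν : ℕ}
variable {M : Type*} [AddCommGroup M] [Module ℤ_[p] M]
variable (lam : M →+ ZMod (p^ν))

variable (ν) in
def GoodSub (Γ : Submodule ℤ_[p] (M × ℤ_[p])) : Prop :=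
  ∀ (m : ℕ) (y : M) (s : ℤ_[p]), (((p:ℤ_[p])^m • y, s) : M × ℤ_[p]) ∈ Γ →
    (p:ℤ_[p])^(m+ν) ∣ s - (p:ℤ_[p])^m * PadL p ν (lam y)

lemma good_bot (htf : ∀ (c : ℤ_[p]) (x : M), c • x = 0 → c = 0 ∨ x = 0) :
    GoodSub ν lam ⊥ := by
  intro m y s hmem
  rw [Submodule.mem_bot, Prod.mk_eq_zero] at hmem
  obtain ⟨h1, h2⟩ := hmem
  rcases htf _ _ h1 with hc | hy
  · exact absurd hc (pow_ne_zero _ (Nat.cast_ne_zero.2 (Fact.out (p := p.Prime)).ne_zero))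
  · rw [h2, hy, map_zero, PadL_zero]
    simp

lemma good_graph {Γ : Submodule ℤ_[p] (M × ℤ_[p])} (hΓ : GoodSub ν lam Γ)
    {s : ℤ_[p]} (h : ((0 : M), s) ∈ Γ) : s = 0 := by
  apply padic_zero_of_dvd_pow
  intro m
  have h1 : (((p:ℤ_[p])^m • (0:M), s) : M × ℤ_[p]) ∈ Γ := by rwa [smul_zero]
  have h2 := hΓ m 0 s h1
  rw [map_zero, PadL_zero, mul_zero, sub_zero] at h2
  exact (pow_dvd_pow _ (Nat.le_add_right m ν)).trans h2

end Good

section Solv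
variable {p : ℕ} [Fact p.Prime] {ν : ℕ}
variable {M : Type*} [AddCommGroup M] [Module ℤ_[p] M]
variable (lam : M →+ ZMod (p^ν))
variable {Γ : Submodule ℤ_[p] (M × ℤ_[p])}

lemma good_solv
    (hsemi : ∀ (c : ℤ_[p]) (x : M), lam (c • x) = PadicInt.toZModPow ν c * lam x)
    (hΓ : GoodSub ν lam Γ) (x w : M) (s c : ℤ_[p]) (m : ℕ) (y : M)
    (hmem : ((w, s) : M × ℤ_[p]) ∈ Γ) (heq : w + c • x = (p:ℤ_[p])^m • y) :
    ∃ t : ℤ_[p], (p:ℤ_[p])^(m+ν) ∣ c * t - ((p:ℤ_[p])^m * PadL p ν (lam y) - s) := by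
  have hpnz : ∀ k : ℕ, ((p:ℤ_[p])^k) ≠ 0 :=
    fun k => pow_ne_zero _ (Nat.cast_ne_zero.2 (Fact.out (p := p.Prime)).ne_zero)
  rcases eq_or_ne c 0 with rfl | hc
  · refine ⟨0, ?_⟩
    rw [zero_smul, add_zero] at heq
    subst heq
    have h2 := hΓ m y s hmem
    have h3 : (0:ℤ_[p]) * 0 - ((p:ℤ_[p])^m * PadL p ν (lam y) - s)
        = s - (p:ℤ_[p])^m * PadL p ν (lam y) := by ring
    rw [h3]
    exact h2
  obtain ⟨a, u, hu, rfl⟩ := padic_unit_decomp c hc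
  rcases le_or_gt a m with ham | ham
  · -- exact solution
    set z : M := (p:ℤ_[p])^(m-a) • y - u • x with hz
    have hpam : (p:ℤ_[p])^a * (p:ℤ_[p])^(m-a) = (p:ℤ_[p])^m := by
      rw [← pow_add]; congr 1; omega
    have hw : w = (p:ℤ_[p])^a • z := by
      rw [hz, smul_sub, smul_smul, smul_smul, hpam, ← heq]
      abel
    have h2 := hΓ a z s (by rwa [← hw])
    obtain ⟨d, hd⟩ := h2
    have hs : s = (p:ℤ_[p])^a * PadL p ν (lam z) + (p:ℤ_[p])^a * (p:ℤ_[p])^ν * d := by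
      have : s - (p:ℤ_[p])^a * PadL p ν (lam z) = (p:ℤ_[p])^(a+ν) * d := hd
      rw [pow_add] at this
      linear_combination this
    have hcan : (u : ℤ_[p]) * (hu.unit⁻¹ : ℤ_[p]ˣ) = 1 := by
      have h4 := hu.unit.mul_inv
      rwa [hu.unit_spec] at h4
    set B : ℤ_[p] := (p:ℤ_[p])^(m-a) * PadL p ν (lam y)
      - PadL p ν (lam z) - (p:ℤ_[p])^ν * d with hB
    refine ⟨(hu.unit⁻¹ : ℤ_[p]ˣ) * B, ?_⟩
    have hcu : (p:ℤ_[p])^a * u * ((hu.unit⁻¹ : ℤ_[p]ˣ) * B) = (p:ℤ_[p])^a * B := by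
      have h5 : (p:ℤ_[p])^a * u * ((hu.unit⁻¹ : ℤ_[p]ˣ) * B)
          = (u * (hu.unit⁻¹ : ℤ_[p]ˣ)) * ((p:ℤ_[p])^a * B) := by ring
      rw [h5, hcan, one_mul]
    rw [hcu, hs, ← hpam, hB]
    have h6 : (p:ℤ_[p])^a * ((p:ℤ_[p])^(m-a) * PadL p ν (lam y) - PadL p ν (lam z)
        - (p:ℤ_[p])^ν * d) - ((p:ℤ_[p])^a * (p:ℤ_[p])^(m-a) * PadL p ν (lam y)
        - ((p:ℤ_[p])^a * PadL p ν (lam z) + (p:ℤ_[p])^a * (p:ℤ_[p])^ν * d)) = 0 := by ring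
    rw [h6]
    exact dvd_zero _
  · -- coarse solution t = PadL (lam x)
    set z : M := y - ((p:ℤ_[p])^(a-m) * u) • x with hz
    have hpam : (p:ℤ_[p])^m * (p:ℤ_[p])^(a-m) = (p:ℤ_[p])^a := by
      rw [← pow_add]; congr 1; omega
    have hw : w = (p:ℤ_[p])^m • z := by
      rw [hz, smul_sub, smul_smul, ← mul_assoc, hpam, ← heq]
      abel
    have h2 := hΓ m z s (by rwa [← hw])
    refine ⟨PadL p ν (lam x), ?_⟩
    have hinner : (p:ℤ_[p])^ν ∣ ((p:ℤ_[p])^(a-m) * u * PadL p ν (lam x)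
        - PadL p ν (lam y) + PadL p ν (lam z)) := by
      rw [← pi_ker]
      have hlz : lam z = lam y - PadicInt.toZModPow ν ((p:ℤ_[p])^(a-m) * u) * lam x := by
        rw [hz, AddMonoidHom.map_sub, hsemi]
      simp only [map_add, map_sub, map_mul, PadL_pi, hlz]
      ring
    have hsplit : (p:ℤ_[p])^a * u * PadL p ν (lam x) - ((p:ℤ_[p])^m * PadL p ν (lam y) - s)
        = (s - (p:ℤ_[p])^m * PadL p ν (lam z))
          + (p:ℤ_[p])^m * ((p:ℤ_[p])^(a-m) * u * PadL p ν (lam x)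
            - PadL p ν (lam y) + PadL p ν (lam z)) := by
      rw [← hpam]; ring
    rw [hsplit, pow_add]
    exact dvd_add ((pow_add (p:ℤ_[p]) m ν) ▸ h2) (mul_dvd_mul_left _ hinner)
end Solv
section Pair
variable {p : ℕ} [Fact p.Prime] {ν : ℕ}
variable {M : Type*} [AddCommGroup M] [Module ℤ_[p] M]
variable (lam : M →+ ZMod (p^ν))
variable {Γ : Submodule ℤ_[p] (M × ℤ_[p])}

lemma good_pair_asym
    (hsemi : ∀ (c : ℤ_[p]) (x : M), lam (c • x) = PadicInt.toZModPow ν c * lam x)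
    (hΓ : GoodSub ν lam Γ) (x : M)
    (w₁ w₂ : M) (s₁ s₂ : ℤ_[p]) (a₁ a₂ : ℕ) (u₁ u₂ : ℤ_[p])
    (hu₁ : IsUnit u₁) (hu₂ : IsUnit u₂) (m₁ m₂ : ℕ) (y₁ y₂ : M)
    (hmem₁ : ((w₁, s₁) : M × ℤ_[p]) ∈ Γ) (hmem₂ : ((w₂, s₂) : M × ℤ_[p]) ∈ Γ)
    (heq₁ : w₁ + ((p:ℤ_[p])^a₁ * u₁) • x = (p:ℤ_[p])^m₁ • y₁)
    (heq₂ : w₂ + ((p:ℤ_[p])^a₂ * u₂) • x = (p:ℤ_[p])^m₂ • y₂)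
    (hm : m₁ + a₂ ≤ m₂ + a₁) (t₂ : ℤ_[p])
    (ht₂ : (p:ℤ_[p])^(m₂+ν) ∣ ((p:ℤ_[p])^a₂ * u₂) * t₂ - ((p:ℤ_[p])^m₂ * PadL p ν (lam y₂) - s₂)) :
    (p:ℤ_[p])^(m₁+ν) ∣ ((p:ℤ_[p])^a₁ * u₁) * t₂ - ((p:ℤ_[p])^m₁ * PadL p ν (lam y₁) - s₁) := by
  have hpnz : ∀ k : ℕ, ((p:ℤ_[p])^k) ≠ 0 :=
    fun k => pow_ne_zero _ (Nat.cast_ne_zero.2 (Fact.out (p := p.Prime)).ne_zero)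
  set c₁ : ℤ_[p] := (p:ℤ_[p])^a₁ * u₁ with hc₁
  set c₂ : ℤ_[p] := (p:ℤ_[p])^a₂ * u₂ with hc₂
  set r₁ : ℤ_[p] := (p:ℤ_[p])^m₁ * PadL p ν (lam y₁) - s₁ with hr₁
  set r₂ : ℤ_[p] := (p:ℤ_[p])^m₂ * PadL p ν (lam y₂) - s₂ with hr₂
  set N : ℕ := m₁ + a₂ with hN
  set d : ℕ := (m₂ + a₁) - N with hd
  have hpN1 : (p:ℤ_[p])^N = (p:ℤ_[p])^m₁ * (p:ℤ_[p])^a₂ := by rw [← pow_add]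
  have hpN2 : (p:ℤ_[p])^a₁ * (p:ℤ_[p])^m₂ = (p:ℤ_[p])^N * (p:ℤ_[p])^d := by
    rw [← pow_add, ← pow_add]; congr 1; omega
  set z : M := u₂ • y₁ - ((p:ℤ_[p])^d * u₁) • y₂ with hz
  -- the combination lies in Γ with first coordinate p^N • z
  have hw₁ : w₁ = (p:ℤ_[p])^m₁ • y₁ - c₁ • x := by rw [← heq₁]; abel
  have hw₂ : w₂ = (p:ℤ_[p])^m₂ • y₂ - c₂ • x := by rw [← heq₂]; abel
  have hcomb : c₂ • w₁ - c₁ • w₂ = (p:ℤ_[p])^N • z := by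
    rw [hw₁, hw₂, hz, smul_sub, smul_sub, smul_sub, smul_smul, smul_smul, smul_smul, smul_smul,
      smul_smul, smul_smul]
    have e1 : c₂ * (p:ℤ_[p])^m₁ = (p:ℤ_[p])^N * u₂ := by rw [hc₂, hpN1]; ring
    have e2 : c₁ * (p:ℤ_[p])^m₂ = (p:ℤ_[p])^N * ((p:ℤ_[p])^d * u₁) := by
      rw [hc₁]
      calc (p:ℤ_[p])^a₁ * u₁ * (p:ℤ_[p])^m₂ = (p:ℤ_[p])^a₁ * (p:ℤ_[p])^m₂ * u₁ := by ring
        _ = (p:ℤ_[p])^N * (p:ℤ_[p])^d * u₁ := by rw [hpN2]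
        _ = _ := by ring
    have e3 : c₂ * c₁ = c₁ * c₂ := mul_comm _ _
    rw [e1, e2, e3]
    abel
  have hmemz : (((p:ℤ_[p])^N • z, c₂ * s₁ - c₁ * s₂) : M × ℤ_[p]) ∈ Γ := by
    have h1 := Γ.sub_mem (Γ.smul_mem c₂ hmem₁) (Γ.smul_mem c₁ hmem₂)
    have h2 : (c₂ • ((w₁, s₁) : M × ℤ_[p]) - c₁ • ((w₂, s₂) : M × ℤ_[p]))
        = ((c₂ • w₁ - c₁ • w₂, c₂ * s₁ - c₁ * s₂) : M × ℤ_[p]) := by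
      simp [Prod.ext_iff, smul_eq_mul]
    rw [h2, hcomb] at h1
    exact h1
  have hC := hΓ N z _ hmemz
  -- p^ν divides the bracket
  have hB : (p:ℤ_[p])^ν ∣ (u₂ * PadL p ν (lam y₁) - (p:ℤ_[p])^d * u₁ * PadL p ν (lam y₂))
      - PadL p ν (lam z) := by
    rw [← pi_ker]
    have hlz : lam z = PadicInt.toZModPow ν u₂ * lam y₁
        - PadicInt.toZModPow ν ((p:ℤ_[p])^d * u₁) * lam y₂ := by
      rw [hz, AddMonoidHom.map_sub, hsemi, hsemi]
    simp only [map_sub, map_mul, PadL_pi, hlz]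
    ring
  -- key divisibility
  have hkey : (p:ℤ_[p])^(N+ν) ∣ c₂ * r₁ - c₁ * r₂ := by
    have hsplit : c₂ * r₁ - c₁ * r₂
        = (p:ℤ_[p])^N * ((u₂ * PadL p ν (lam y₁) - (p:ℤ_[p])^d * u₁ * PadL p ν (lam y₂))
            - PadL p ν (lam z))
          + ((c₂ * s₁ - c₁ * s₂) - (p:ℤ_[p])^N * PadL p ν (lam z)) * (-1)
          + ((c₂ * s₁ - c₁ * s₂)) * 0 := by
      rw [hr₁, hr₂]
      have e1 : (p:ℤ_[p])^a₂ * u₂ * ((p:ℤ_[p])^m₁ * PadL p ν (lam y₁))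
          = (p:ℤ_[p])^N * (u₂ * PadL p ν (lam y₁)) := by rw [hpN1]; ring
      have e2 : (p:ℤ_[p])^a₁ * u₁ * ((p:ℤ_[p])^m₂ * PadL p ν (lam y₂))
          = (p:ℤ_[p])^N * ((p:ℤ_[p])^d * u₁ * PadL p ν (lam y₂)) := by
        calc (p:ℤ_[p])^a₁ * u₁ * ((p:ℤ_[p])^m₂ * PadL p ν (lam y₂))
            = (p:ℤ_[p])^a₁ * (p:ℤ_[p])^m₂ * (u₁ * PadL p ν (lam y₂)) := by ring
          _ = (p:ℤ_[p])^N * (p:ℤ_[p])^d * (u₁ * PadL p ν (lam y₂)) := by rw [hpN2]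
          _ = _ := by ring
      rw [← hc₂] at e1
      rw [← hc₁] at e2
      linear_combination e1 - e2
    rw [hsplit]
    rw [pow_add]
    refine dvd_add (dvd_add (mul_dvd_mul_left _ ?_) (Dvd.dvd.mul_right ?_ _)) (by simp)
    · exact hB
    · rw [← pow_add]; exact hC
  -- conclude
  have h5 : c₂ * (c₁ * t₂ - r₁) = c₁ * (c₂ * t₂ - r₂) - (c₂ * r₁ - c₁ * r₂) := by ring
  have h6 : (p:ℤ_[p])^(a₂ + (m₁ + ν)) ∣ c₂ * (c₁ * t₂ - r₁) := by
    rw [h5]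
    refine dvd_sub ?_ ?_
    · have : (p:ℤ_[p])^(a₁ + (m₂ + ν)) ∣ c₁ * (c₂ * t₂ - r₂) := by
        rw [pow_add, hc₁]
        exact mul_dvd_mul (Dvd.dvd.mul_right dvd_rfl u₁) ht₂
      exact (pow_dvd_pow _ (by omega)).trans this
    · exact (pow_dvd_pow _ (by omega : a₂ + (m₁ + ν) ≤ N + ν)).trans hkey
  rw [pow_add, hc₂] at h6
  have h7 : (p:ℤ_[p])^a₂ * u₂ * (c₁ * t₂ - r₁) = (p:ℤ_[p])^a₂ * (u₂ * (c₁ * t₂ - r₁)) := by ring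
  rw [h7] at h6
  have h8 := (mul_dvd_mul_iff_left (hpnz a₂)).1 h6
  exact (IsUnit.dvd_mul_left hu₂).1 h8
end Pair
section Ext
variable {p : ℕ} [Fact p.Prime] {ν : ℕ}
variable {M : Type*} [AddCommGroup M] [Module ℤ_[p] M]
variable (lam : M →+ ZMod (p^ν))
variable {Γ : Submodule ℤ_[p] (M × ℤ_[p])}

lemma good_ext
    (hsemi : ∀ (c : ℤ_[p]) (x : M), lam (c • x) = PadicInt.toZModPow ν c * lam x)
    (hΓ : GoodSub ν lam Γ) (x : M) :
    ∃ t : ℤ_[p], GoodSub ν lam (Γ ⊔ (Submodule.span ℤ_[p] {((x, t) : M × ℤ_[p])})) := by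
  classical
  -- all constraints, indexed
  set ι : Type _ := {v : (M × ℤ_[p]) × ℤ_[p] × ℕ × M //
    v.1 ∈ Γ ∧ v.1.1 + v.2.1 • x = ((p:ℤ_[p])^(v.2.2.1)) • v.2.2.2} with hι
  have key : ∃ t : ℤ_[p], ∀ i : ι,
      (p:ℤ_[p])^(i.1.2.2.1 + ν) ∣ i.1.2.1 * t
        - ((p:ℤ_[p])^(i.1.2.2.1) * PadL p ν (lam i.1.2.2.2) - i.1.1.2) := by
    apply padic_constraints
    rintro ⟨⟨⟨w₁, s₁⟩, c₁, m₁, y₁⟩, hmem₁, heq₁⟩ ⟨⟨⟨w₂, s₂⟩, c₂, m₂, y₂⟩, hmem₂, heq₂⟩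
    simp only at hmem₁ heq₁ hmem₂ heq₂ ⊢
    -- trivial cases c = 0
    rcases eq_or_ne c₁ 0 with rfl | hc₁
    · obtain ⟨t, ht⟩ := good_solv lam hsemi hΓ x w₂ s₂ c₂ m₂ y₂ hmem₂ heq₂
      obtain ⟨t', ht'⟩ := good_solv lam hsemi hΓ x w₁ s₁ 0 m₁ y₁ hmem₁ heq₁
      refine ⟨t, ?_, ht⟩
      rwa [zero_mul] at ht' ⊢
    rcases eq_or_ne c₂ 0 with rfl | hc₂
    · obtain ⟨t, ht⟩ := good_solv lam hsemi hΓ x w₁ s₁ c₁ m₁ y₁ hmem₁ heq₁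
      obtain ⟨t', ht'⟩ := good_solv lam hsemi hΓ x w₂ s₂ 0 m₂ y₂ hmem₂ heq₂
      refine ⟨t, ht, ?_⟩
      rwa [zero_mul] at ht' ⊢
    obtain ⟨a₁, u₁, hu₁, rfl⟩ := padic_unit_decomp c₁ hc₁
    obtain ⟨a₂, u₂, hu₂, rfl⟩ := padic_unit_decomp c₂ hc₂
    rcases le_total (m₁ + a₂) (m₂ + a₁) with hm | hm
    · obtain ⟨t, ht⟩ := good_solv lam hsemi hΓ x w₂ s₂ _ m₂ y₂ hmem₂ heq₂
      exact ⟨t, good_pair_asym lam hsemi hΓ x w₁ w₂ s₁ s₂ a₁ a₂ u₁ u₂ hu₁ hu₂ m₁ m₂ y₁ y₂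
        hmem₁ hmem₂ heq₁ heq₂ hm t ht, ht⟩
    · obtain ⟨t, ht⟩ := good_solv lam hsemi hΓ x w₁ s₁ _ m₁ y₁ hmem₁ heq₁
      exact ⟨t, ht, good_pair_asym lam hsemi hΓ x w₂ w₁ s₂ s₁ a₂ a₁ u₂ u₁ hu₂ hu₁ m₂ m₁ y₂ y₁
        hmem₂ hmem₁ heq₂ heq₁ hm t ht⟩
  obtain ⟨t, ht⟩ := key
  refine ⟨t, ?_⟩
  intro m y s hmem
  rw [Submodule.mem_sup] at hmem
  obtain ⟨⟨w, s'⟩, hw, v, hv, hsum⟩ := hmem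
  rw [Submodule.mem_span_singleton] at hv
  obtain ⟨c, rfl⟩ := hv
  rw [Prod.smul_mk, Prod.mk_add_mk, Prod.mk.injEq] at hsum
  obtain ⟨h1, h2⟩ := hsum
  have heq : w + c • x = (p:ℤ_[p])^m • y := h1
  have := ht ⟨⟨⟨w, s'⟩, c, m, y⟩, hw, heq⟩
  simp only at this
  have h3 : s - (p:ℤ_[p])^m * PadL p ν (lam y)
      = (c * t - ((p:ℤ_[p])^m * PadL p ν (lam y) - s')) := by
    rw [← h2]; simp [smul_eq_mul]; ring
  rw [h3]
  exact this
end Ext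

section Main
variable {p : ℕ} [Fact p.Prime] {ν : ℕ}
variable {M : Type*} [AddCommGroup M] [Module ℤ_[p] M]

lemma exists_padic_lift
    (htf : ∀ (c : ℤ_[p]) (x : M), c • x = 0 → c = 0 ∨ x = 0)
    (lam : M →+ ZMod (p^ν))
    (hsemi : ∀ (c : ℤ_[p]) (x : M), lam (c • x) = PadicInt.toZModPow ν c * lam x) :
    ∃ μ : M →ₗ[ℤ_[p]] ℤ_[p], ∀ x, PadicInt.toZModPow ν (μ x) = lam x := by
  classical
  obtain ⟨Γ, hmax⟩ := zorn_le₀ {Γ : Submodule ℤ_[p] (M × ℤ_[p]) | GoodSub ν lam Γ} (by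
    intro c hcs hchain
    rcases c.eq_empty_or_nonempty with rfl | hne
    · exact ⟨⊥, good_bot lam htf, by simp⟩
    refine ⟨sSup c, ?_, fun z hz => le_sSup hz⟩
    intro m y s hmem
    have hdir : DirectedOn (· ≤ ·) c := hchain.directedOn
    rw [Submodule.mem_sSup_of_directed hne hdir] at hmem
    obtain ⟨Γ₀, hΓ₀, hmem₀⟩ := hmem
    exact (hcs hΓ₀) m y s hmem₀)
  have hΓ : GoodSub ν lam Γ := hmax.prop
  -- totality
  have htot : ∀ x : M, ∃ t : ℤ_[p], ((x, t) : M × ℤ_[p]) ∈ Γ := by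
    intro x
    by_contra hx
    obtain ⟨t, hgood⟩ := good_ext lam hsemi hΓ x
    have hle : Γ ≤ Γ ⊔ Submodule.span ℤ_[p] {((x, t) : M × ℤ_[p])} := le_sup_left
    have := hmax.2 hgood hle
    exact hx ⟨t, this (le_sup_right (α := Submodule ℤ_[p] (M × ℤ_[p]))
      (Submodule.mem_span_singleton_self _))⟩
  have huniq : ∀ (x : M) (t t' : ℤ_[p]),
      ((x, t) : M × ℤ_[p]) ∈ Γ → ((x, t') : M × ℤ_[p]) ∈ Γ → t = t' := by
    intro x t t' h h'
    have hsub := Γ.sub_mem h h'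
    have h0 : (((x, t) : M × ℤ_[p]) - (x, t')) = ((0 : M), t - t') := by
      simp [Prod.ext_iff]
    rw [h0] at hsub
    exact sub_eq_zero.1 (good_graph lam hΓ hsub)
  choose g hg using htot
  have hadd : ∀ x y : M, g (x + y) = g x + g y := by
    intro x y
    exact huniq _ _ _ (hg (x+y)) (by
      have := Γ.add_mem (hg x) (hg y)
      simpa using this)
  have hsmul : ∀ (c : ℤ_[p]) (x : M), g (c • x) = c * g x := by
    intro c x
    exact huniq _ _ _ (hg (c • x)) (by
      have := Γ.smul_mem c (hg x)
      simpa [Prod.smul_mk, smul_eq_mul] using this)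
  refine ⟨⟨⟨g, hadd⟩, fun c x => by simpa [smul_eq_mul] using hsmul c x⟩, ?_⟩
  intro x
  have h1 : (((p:ℤ_[p])^0 • x, g x) : M × ℤ_[p]) ∈ Γ := by
    simpa using hg x
  have h2 := hΓ 0 x (g x) h1
  rw [pow_zero, one_mul, zero_add] at h2
  have h3 : PadicInt.toZModPow ν (g x - PadL p ν (lam x)) = 0 := (pi_ker ν _).2 h2
  rw [map_sub, PadL_pi, sub_eq_zero] at h3
  exact h3
end Main
/-- Let `G` be a finite abelian group, `p` a prime, `R = ℤ_p[G]`, and `X` a `ℤ_p[G]`-module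
that is torsion-free over `ℤ_p`.  For `ν > 0`, let `X̄ν = X ⊗ ℤ/p^ν ℤ` (realized as any
`R_ν = R/p^ν R`-module `Y` with a surjective semilinear map `q : X → Y` whose kernel is
`p^ν X`, along the reduction map `φ : ℤ_p[G] → (ℤ/p^ν ℤ)[G]`).  Then the reduction map
`Hom_R(X, R) → Hom_{R_ν}(X̄ν, R_ν)`, `f ↦ (q x ↦ φ (f x))`, is surjective, and its kernel
is `p^ν · Hom_R(X,R)`, so it induces an `R_ν`-isomorphism
`Hom_R(X, R) ⊗ ℤ/p^ν ℤ ≅ Hom_{R_ν}(X̄ν, R_ν)`. -/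
theorem hom_reduction_surjective
    (p : ℕ) [Fact p.Prime] (ν : ℕ) (hν : 0 < ν)
    {G : Type*} [CommGroup G] [Fintype G]
    {X : Type*} [AddCommGroup X] [Module (MonoidAlgebra ℤ_[p] G) X]
    (hXtf : ∀ (c : ℤ_[p]) (x : X),
      (algebraMap ℤ_[p] (MonoidAlgebra ℤ_[p] G) c) • x = 0 → c = 0 ∨ x = 0)
    {Y : Type*} [AddCommGroup Y] [Module (MonoidAlgebra (ZMod (p ^ ν)) G) Y]
    (φ : MonoidAlgebra ℤ_[p] G →+* MonoidAlgebra (ZMod (p ^ ν)) G)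
    (hφ : ∀ (a : ℤ_[p]) (g : G),
      φ (MonoidAlgebra.single g a) = MonoidAlgebra.single g (PadicInt.toZModPow ν a))
    (q : X →ₛₗ[φ] Y) (hqsurj : Function.Surjective q)
    (hker : ∀ x : X, q x = 0 ↔ ∃ y : X, x = ((p : MonoidAlgebra ℤ_[p] G) ^ ν) • y) :
    (∀ h : Y →ₗ[MonoidAlgebra (ZMod (p ^ ν)) G] MonoidAlgebra (ZMod (p ^ ν)) G,
      ∃ f : X →ₗ[MonoidAlgebra ℤ_[p] G] MonoidAlgebra ℤ_[p] G, ∀ x, φ (f x) = h (q x)) ∧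
    (∀ f : X →ₗ[MonoidAlgebra ℤ_[p] G] MonoidAlgebra ℤ_[p] G,
      (∀ x, φ (f x) = 0) ↔
        ∃ f' : X →ₗ[MonoidAlgebra ℤ_[p] G] MonoidAlgebra ℤ_[p] G,
          f = ((p : MonoidAlgebra ℤ_[p] G) ^ ν) • f') := by
  classical
  haveI := NeZero_pow_p (p := p) ν
  have hpνnz : ((p:ℤ_[p])^ν) ≠ 0 :=
    pow_ne_zero _ (Nat.cast_ne_zero.2 (Fact.out (p := p.Prime)).ne_zero)
  -- coefficientwise description of φ
  have hφ_apply : ∀ (r : MonoidAlgebra ℤ_[p] G) (g : G),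
      (φ r).coeff g = PadicInt.toZModPow ν (r.coeff g) := by
    intro r g
    induction r using MonoidAlgebra.induction_linear with
    | zero => simp
    | add f₁ f₂ hf₁ hf₂ =>
      rw [map_add, MonoidAlgebra.coeff_add, MonoidAlgebra.coeff_add, Finsupp.add_apply,
        Finsupp.add_apply, map_add, hf₁, hf₂]
    | single a b =>
      rw [hφ b a]
      rw [MonoidAlgebra.coeff_single, MonoidAlgebra.coeff_single, Finsupp.single_apply,
        Finsupp.single_apply]
      split_ifs <;> simp
  have hφp : φ ((p : MonoidAlgebra ℤ_[p] G)^ν) = 0 := by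
    have h1 : ((p : MonoidAlgebra ℤ_[p] G)^ν) = ((p^ν : ℕ) : MonoidAlgebra ℤ_[p] G) := by
      push_cast; ring
    rw [h1, map_natCast, MonoidAlgebra.natCast_def, ZMod.natCast_self,
      MonoidAlgebra.single_zero]
  have hmulapp : ∀ (r : MonoidAlgebra ℤ_[p] G) (g : G),
      (((p : MonoidAlgebra ℤ_[p] G)^ν) * r).coeff g = (p:ℤ_[p])^ν * r.coeff g := by
    intro r g
    rw [← Nat.cast_pow, ← nsmul_eq_mul, MonoidAlgebra.coeff_smul_apply, nsmul_eq_mul, Nat.cast_pow]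
  constructor
  · intro h
    letI : Module ℤ_[p] X := Module.compHom X (algebraMap ℤ_[p] (MonoidAlgebra ℤ_[p] G))
    have hsmul_def : ∀ (c : ℤ_[p]) (x : X),
        c • x = (algebraMap ℤ_[p] (MonoidAlgebra ℤ_[p] G) c) • x := fun c x => rfl
    have halg : ∀ c : ℤ_[p], algebraMap ℤ_[p] (MonoidAlgebra ℤ_[p] G) c
        = MonoidAlgebra.single 1 c := by
      intro c
      rw [MonoidAlgebra.coe_algebraMap]
      simp
    set lam : X →+ ZMod (p^ν) :=
      { toFun := fun x => (h (q x)).coeff 1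
        map_zero' := by simp
        map_add' := fun x y => by
          show (h (q (x + y))).coeff 1 = (h (q x)).coeff 1 + (h (q y)).coeff 1
          rw [map_add, map_add, MonoidAlgebra.coeff_add, Finsupp.add_apply] } with hlam
    have hsemi : ∀ (c : ℤ_[p]) (x : X), lam (c • x) = PadicInt.toZModPow ν c * lam x := by
      intro c x
      show (h (q (c • x))).coeff 1 = PadicInt.toZModPow ν c * (h (q x)).coeff 1
      rw [hsmul_def, map_smulₛₗ, halg, hφ, map_smul, smul_eq_mul,
        MonoidAlgebra.single_one_mul_apply]
    have htf : ∀ (c : ℤ_[p]) (x : X), c • x = 0 → c = 0 ∨ x = 0 := by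
      intro c x hc
      exact hXtf c x hc
    obtain ⟨μ, hμ⟩ := exists_padic_lift htf lam hsemi
    set f₀ : X → MonoidAlgebra ℤ_[p] G := fun x => ∑ g : G,
      MonoidAlgebra.single g (μ ((MonoidAlgebra.single g⁻¹ (1:ℤ_[p])
        : MonoidAlgebra ℤ_[p] G) • x)) with hf₀
    have hadd : ∀ x y : X, f₀ (x + y) = f₀ x + f₀ y := by
      intro x y
      rw [hf₀, ← Finset.sum_add_distrib]
      refine Finset.sum_congr rfl fun g _ => ?_
      rw [smul_add, map_add, MonoidAlgebra.single_add]
    have hkey : ∀ (s : G) (a : ℤ_[p]) (x : X),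
        f₀ ((MonoidAlgebra.single s a : MonoidAlgebra ℤ_[p] G) • x)
          = (MonoidAlgebra.single s a : MonoidAlgebra ℤ_[p] G) * f₀ x := by
      intro s a x
      have hterm : ∀ g : G,
          (MonoidAlgebra.single g⁻¹ (1:ℤ_[p]) : MonoidAlgebra ℤ_[p] G) •
            ((MonoidAlgebra.single s a : MonoidAlgebra ℤ_[p] G) • x)
          = a • ((MonoidAlgebra.single (g⁻¹ * s) (1:ℤ_[p]) : MonoidAlgebra ℤ_[p] G) • x) := by
        intro g
        rw [hsmul_def, halg, ← mul_smul, ← mul_smul, MonoidAlgebra.single_mul_single,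
          MonoidAlgebra.single_mul_single]
        congr 1
        simp
      have hμterm : ∀ g : G,
          μ ((MonoidAlgebra.single g⁻¹ (1:ℤ_[p]) : MonoidAlgebra ℤ_[p] G) •
            ((MonoidAlgebra.single s a : MonoidAlgebra ℤ_[p] G) • x))
          = a * μ ((MonoidAlgebra.single (g⁻¹ * s) (1:ℤ_[p]) : MonoidAlgebra ℤ_[p] G) • x) := by
        intro g
        rw [hterm g, map_smul, smul_eq_mul]
      rw [hf₀]
      simp only [hμterm]
      rw [Finset.mul_sum]
      refine Fintype.sum_equiv (Equiv.mulLeft s⁻¹) _ _ ?_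
      intro g
      simp only [Equiv.coe_mulLeft]
      rw [MonoidAlgebra.single_mul_single]
      have e1 : s * (s⁻¹ * g) = g := by group
      have e2 : (s⁻¹ * g)⁻¹ = g⁻¹ * s := by group
      rw [e1, e2]
    have hlin : ∀ (r : MonoidAlgebra ℤ_[p] G) (x : X), f₀ (r • x) = r * f₀ x := by
      intro r x
      induction r using MonoidAlgebra.induction_linear with
      | zero => rw [zero_smul, zero_mul]
                 -- f₀ 0 = 0
                rw [hf₀]
                refine Finset.sum_eq_zero fun g _ => ?_
                rw [smul_zero, map_zero, MonoidAlgebra.single_zero]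
      | add r₁ r₂ h₁ h₂ => rw [add_smul, hadd, h₁, h₂, add_mul]
      | single a b => exact hkey a b x
    refine ⟨⟨⟨f₀, hadd⟩, fun r x => by rw [smul_eq_mul]; exact hlin r x⟩, ?_⟩
    intro x
    show φ (f₀ x) = h (q x)
    rw [hf₀, map_sum]
    have hterm2 : ∀ g : G,
        φ (MonoidAlgebra.single g (μ ((MonoidAlgebra.single g⁻¹ (1:ℤ_[p])
          : MonoidAlgebra ℤ_[p] G) • x)))
        = MonoidAlgebra.single g ((h (q x)).coeff g) := by
      intro g
      rw [hφ, hμ]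
      congr 1
      show (h (q ((MonoidAlgebra.single g⁻¹ (1:ℤ_[p]) : MonoidAlgebra ℤ_[p] G) • x))).coeff 1
        = (h (q x)).coeff g
      have e0 : PadicInt.toZModPow ν (1:ℤ_[p]) = 1 := map_one _
      rw [map_smulₛₗ, hφ, e0, map_smul, smul_eq_mul, MonoidAlgebra.single_mul_apply, one_mul]
      congr 1
      group
    simp only [hterm2]
    -- ∑ g, single g (r g) = r
    ext g'
    rw [MonoidAlgebra.coeff_sum, Finset.sum_apply']
    simp only [MonoidAlgebra.coeff_single, Finsupp.single_apply]
    rw [Finset.sum_ite_eq' Finset.univ g' (fun g => (h (q x)).coeff g)]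
    simp
  · intro f
    constructor
    · intro h0
      have hdvd : ∀ (x : X) (g : G), (p:ℤ_[p])^ν ∣ (f x).coeff g := by
        intro x g
        rw [← pi_ker, ← hφ_apply, h0 x]
        simp
      set d : ℤ_[p] → ℤ_[p] := fun a => if h : (p:ℤ_[p])^ν ∣ a then h.choose else 0 with hddef
      have hd : ∀ a, (p:ℤ_[p])^ν ∣ a → a = (p:ℤ_[p])^ν * d a := by
        intro a ha
        rw [hddef]
        simp only [dif_pos ha]
        exact ha.choose_spec
      have hd0 : d 0 = 0 := by
        have h1 := hd 0 (dvd_zero _)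
        exact ((mul_eq_zero.1 h1.symm).resolve_left hpνnz)
      set F : X → MonoidAlgebra ℤ_[p] G := fun x =>
        MonoidAlgebra.ofCoeff (Finsupp.mapRange d hd0 (f x).coeff) with hFdef
      have hFspec : ∀ x, f x = ((p : MonoidAlgebra ℤ_[p] G)^ν) * F x := by
        intro x
        ext g
        rw [hmulapp, hFdef]
        simp only [MonoidAlgebra.coeff_ofCoeff, Finsupp.mapRange_apply]
        exact hd _ (hdvd x g)
      have hinj : ∀ r r' : MonoidAlgebra ℤ_[p] G,
          ((p : MonoidAlgebra ℤ_[p] G)^ν) * r = ((p : MonoidAlgebra ℤ_[p] G)^ν) * r' → r = r' := by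
        intro r r' hrr
        ext g
        have h1 := congrArg (fun z : MonoidAlgebra ℤ_[p] G => z.coeff g) hrr
        simp only [hmulapp] at h1
        exact mul_left_cancel₀ hpνnz h1
      refine ⟨⟨⟨F, ?_⟩, ?_⟩, ?_⟩
      · intro x y
        apply hinj
        rw [mul_add, ← hFspec, ← hFspec, ← hFspec, map_add]
      · intro r x
        apply hinj
        show _ = ((p : MonoidAlgebra ℤ_[p] G)^ν) * (r • F x)
        rw [smul_eq_mul, ← hFspec]
        calc f (r • x) = r * f x := by rw [map_smul, smul_eq_mul]
          _ = r * (((p : MonoidAlgebra ℤ_[p] G)^ν) * F x) := by rw [← hFspec]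
          _ = ((p : MonoidAlgebra ℤ_[p] G)^ν) * (r * F x) := by ring
      · apply LinearMap.ext
        intro x
        rw [LinearMap.smul_apply, smul_eq_mul]
        exact hFspec x
    · rintro ⟨f', rfl⟩ x
      rw [LinearMap.smul_apply, smul_eq_mul, map_mul, hφp, zero_mul]
end

section
/- Let H = H_1 × ⋯ × H_i be a finite abelian p-group written as a product of cyclic groups H_j of order p^{n_j} with fixed generators σ_j, let R = Z_p[H], let I_H be the augmentation ideal of R, and let J° = (∏_{j=1}^i I(H_j))·R, where I(H_j) is the augmentation ideal of Z_p[H_j]. Let X be an R-module and let D = ∏_{j=1}^i D_j with D_j = Σ_{m=1}^{|H_j|−1} m σ_j^m the Kolyvagin operator. Define s : R/I_H J° → R/I_H J° by s = Σ_{d ⊆ {1,…,i}} (−1)^{i−|d|} π_d, where π_d is induced by the projection H → ∏_{j∈d} H_j ⊆ H. Then for any x ∈ X, the map id_X ⊗ s on X ⊗_{Z_p} (R/I_H J°) sends Σ_{σ ∈ H} σx ⊗ σ^{-1} to (−1)^i · Dx ⊗ ∏_{j=1}^i (σ_j − 1). -/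
instance primePowNeZero (p k : ℕ) [hp : Fact p.Prime] : NeZero (p ^ k) :=
  ⟨pow_ne_zero _ hp.out.ne_zero⟩

/-- `H = H₁ × ⋯ × H_i`, a product of cyclic groups `H_j` of order `p^{n_j}`. -/
abbrev Hgrp (p : ℕ) (i : ℕ) (n : Fin i → ℕ) : Type :=
  (j : Fin i) → Multiplicative (ZMod (p ^ n j))

/-- The fixed generator `σ_j` of the `j`-th factor `H_j`, viewed inside `H`. -/
def sigmaGen (p : ℕ) {i : ℕ} {n : Fin i → ℕ} (j : Fin i) : Hgrp p i n :=
  Pi.mulSingle j (Multiplicative.ofAdd (1 : ZMod (p ^ n j)))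

/-- The projection `π_d : H → ∏_{j ∈ d} H_j ⊆ H`. -/
def projD (p : ℕ) {i : ℕ} {n : Fin i → ℕ} (d : Finset (Fin i)) :
    Hgrp p i n →* Hgrp p i n where
  toFun h := fun j => if j ∈ d then h j else 1
  map_one' := by funext j; simp
  map_mul' a b := by funext j; by_cases hj : j ∈ d <;> simp [hj]

/-- The Kolyvagin operator `D = ∏_j D_j`, `D_j = Σ_{m=1}^{|H_j|-1} m σ_j^m`. -/
noncomputable def Dop (p : ℕ) [Fact p.Prime] (i : ℕ) (n : Fin i → ℕ) :
    MonoidAlgebra ℤ_[p] (Hgrp p i n) :=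
  ∏ j : Fin i, ∑ m ∈ Finset.range (p ^ n j),
    (m : ℤ_[p]) • MonoidAlgebra.of ℤ_[p] (Hgrp p i n) ((sigmaGen p j) ^ m)

/-- The augmentation ideal `I_H` of `R = ℤ_p[H]`. -/
noncomputable def augIdeal (p : ℕ) [Fact p.Prime] (i : ℕ) (n : Fin i → ℕ) :
    Ideal (MonoidAlgebra ℤ_[p] (Hgrp p i n)) :=
  RingHom.ker ((MonoidAlgebra.lift ℤ_[p] ℤ_[p] (Hgrp p i n))
    (1 : Hgrp p i n →* ℤ_[p])).toRingHom

/-- The ideal `J° = (∏_j I(H_j))·R`, where `I(H_j)` is the augmentation ideal of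
`ℤ_p[H_j]`. -/
noncomputable def Jcirc (p : ℕ) [Fact p.Prime] (i : ℕ) (n : Fin i → ℕ) :
    Ideal (MonoidAlgebra ℤ_[p] (Hgrp p i n)) :=
  ∏ j : Fin i, Ideal.span (Set.range fun t : Multiplicative (ZMod (p ^ n j)) =>
    MonoidAlgebra.of ℤ_[p] (Hgrp p i n) (Pi.mulSingle j t) - 1)

/-- The operator `s = Σ_{d ⊆ {1,…,i}} (−1)^{i−|d|} π_d` on `R` (it descends to
`R/I_H J°`). -/
noncomputable def sTilde (p : ℕ) [Fact p.Prime] (i : ℕ) (n : Fin i → ℕ)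
    (r : MonoidAlgebra ℤ_[p] (Hgrp p i n)) : MonoidAlgebra ℤ_[p] (Hgrp p i n) :=
  ∑ d : Finset (Fin i), ((-1 : ℤ_[p]) ^ (i - d.card)) •
    MonoidAlgebra.mapDomainRingHom ℤ_[p] (projD p d) r

section Aux
variable (p : ℕ) [Fact p.Prime] (i : ℕ) (n : Fin i → ℕ)

local notation "R" => MonoidAlgebra ℤ_[p] (Hgrp p i n)
noncomputable def eH : Hgrp p i n →* R := MonoidAlgebra.of ℤ_[p] (Hgrp p i n)

noncomputable def Aj (j : Fin i) : Ideal R :=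
  Ideal.span (Set.range fun t : Multiplicative (ZMod (p ^ n j)) =>
    eH p i n (Pi.mulSingle j t) - 1)

lemma gen_mem_Aj (j : Fin i) (t : Multiplicative (ZMod (p ^ n j))) :
    eH p i n (Pi.mulSingle j t) - 1 ∈ Aj p i n j :=
  Ideal.subset_span ⟨t, rfl⟩

-- key congruence: e(single j (ofAdd k)) - 1 ≡ k (e σ_j - 1) mod A_j ^ 2
lemma key0 (j : Fin i) (k : ℕ) :
    eH p i n (Pi.mulSingle j (Multiplicative.ofAdd ((k : ZMod (p ^ n j))))) - 1
      - (k : ℤ_[p]) • (eH p i n (sigmaGen p j) - 1) ∈ (Aj p i n j) ^ 2 := by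
  induction k with
  | zero => simp
  | succ k ih =>
    have hsplit : (Pi.mulSingle j (Multiplicative.ofAdd (((k+1 : ℕ) : ZMod (p ^ n j)))) : Hgrp p i n)
        = Pi.mulSingle j (Multiplicative.ofAdd ((k : ZMod (p ^ n j)))) * sigmaGen p j := by
      rw [sigmaGen, ← Pi.mulSingle_mul]
      push_cast
      rfl
    set a := eH p i n (Pi.mulSingle j (Multiplicative.ofAdd ((k : ZMod (p ^ n j)))))
    set b := eH p i n (sigmaGen p j)
    have hab : eH p i n (Pi.mulSingle j (Multiplicative.ofAdd (((k+1 : ℕ) : ZMod (p ^ n j))))) = a * b := by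
      rw [hsplit, map_mul]
    rw [hab]
    have h2 : (a - 1) * (b - 1) ∈ (Aj p i n j) ^ 2 := by
      rw [sq]
      exact Ideal.mul_mem_mul (gen_mem_Aj p i n j _) (gen_mem_Aj p i n j _)
    have hrw : a * b - 1 - ((k+1 : ℕ) : ℤ_[p]) • (b - 1)
        = (a - 1) * (b - 1) + (a - 1 - (k : ℤ_[p]) • (b - 1)) := by
      simp only [Algebra.smul_def]
      push_cast
      ring
    rw [hrw]
    exact Ideal.add_mem _ h2 ih

end Aux

section Aux2
variable (p : ℕ) [Fact p.Prime] (i : ℕ) (n : Fin i → ℕ)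
local notation "R" => MonoidAlgebra ℤ_[p] (Hgrp p i n)

lemma pn_smul_mem (j : Fin i) :
    ((p ^ n j : ℕ) : ℤ_[p]) • (eH p i n (sigmaGen p j) - 1) ∈ (Aj p i n j) ^ 2 := by
  have h := key0 p i n j (p ^ n j)
  have h1 : ((p ^ n j : ℕ) : ZMod (p ^ n j)) = 0 := by
    simp
  rw [h1] at h
  rw [← neg_neg (((p ^ n j : ℕ) : ℤ_[p]) • (eH p i n (sigmaGen p j) - 1))]
  exact neg_mem (by simpa using h)

lemma keyInv (j : Fin i) (σ : Hgrp p i n) :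
    eH p i n (Pi.mulSingle j ((σ j)⁻¹)) - 1
      + ((Multiplicative.toAdd (σ j)).val : ℤ_[p]) • (eH p i n (sigmaGen p j) - 1)
      ∈ (Aj p i n j) ^ 2 := by
  set a : ZMod (p ^ n j) := Multiplicative.toAdd (σ j) with ha
  have hval : a.val ≤ p ^ n j := le_of_lt (ZMod.val_lt a)
  have hcast : (((p ^ n j - a.val : ℕ)) : ZMod (p ^ n j)) = -a := by
    rw [Nat.cast_sub hval, ZMod.natCast_self, zero_sub, ZMod.natCast_val, ZMod.cast_id]
  have hinv : (σ j)⁻¹ = Multiplicative.ofAdd ((((p ^ n j - a.val : ℕ)) : ZMod (p ^ n j))) := by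
    rw [hcast]
    rfl
  have h := key0 p i n j (p ^ n j - a.val)
  rw [← hinv] at h
  have hc : ((p ^ n j - a.val : ℕ) : ℤ_[p]) = ((p ^ n j : ℕ) : ℤ_[p]) - (a.val : ℤ_[p]) := by
    push_cast [Nat.cast_sub hval]
    ring
  have hsum := Ideal.add_mem _ h (pn_smul_mem p i n j)
  convert hsum using 1
  rw [hc, sub_smul]
  abel

end Aux2

section Aux3
variable (p : ℕ) [Fact p.Prime] (i : ℕ) (n : Fin i → ℕ)
local notation "R" => MonoidAlgebra ℤ_[p] (Hgrp p i n)

lemma Aj_le_aug (j : Fin i) : Aj p i n j ≤ augIdeal p i n := by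
  rw [Aj, Ideal.span_le]
  rintro _ ⟨t, rfl⟩
  have h : ((MonoidAlgebra.lift ℤ_[p] ℤ_[p] (Hgrp p i n))
      (1 : Hgrp p i n →* ℤ_[p])).toRingHom (eH p i n (Pi.mulSingle j t) - 1) = 0 := by
    rw [AlgHom.toRingHom_eq_coe, RingHom.coe_coe, map_sub]
    rw [show (eH p i n (Pi.mulSingle j t))
      = MonoidAlgebra.of ℤ_[p] (Hgrp p i n) (Pi.mulSingle j t) from rfl]
    rw [MonoidAlgebra.lift_of, map_one]
    simp
  exact h

lemma AjSq_le (j : Fin i) : (Aj p i n j) ^ 2 ≤ augIdeal p i n * Aj p i n j := by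
  rw [sq]
  exact Ideal.mul_mono_right (le_refl _) |>.trans (Ideal.mul_mono_left (Aj_le_aug p i n j))

lemma prodCongr (r s' : Fin i → R)
    (hr : ∀ j, r j ∈ Aj p i n j) (hs : ∀ j, s' j ∈ Aj p i n j)
    (hd : ∀ j, r j - s' j ∈ (Aj p i n j) ^ 2) (d : Finset (Fin i)) :
    ∏ j ∈ d, r j - ∏ j ∈ d, s' j ∈ augIdeal p i n * ∏ j ∈ d, Aj p i n j := by
  classical
  induction d using Finset.induction_on with
  | empty => simp
  | @insert a d ha ih =>
    rw [Finset.prod_insert ha, Finset.prod_insert ha, Finset.prod_insert ha]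
    have key : r a * ∏ j ∈ d, r j - s' a * ∏ j ∈ d, s' j
        = (r a - s' a) * ∏ j ∈ d, r j + s' a * (∏ j ∈ d, r j - ∏ j ∈ d, s' j) := by ring
    rw [key]
    apply Ideal.add_mem
    · have h1 : (r a - s' a) * ∏ j ∈ d, r j
          ∈ (augIdeal p i n * Aj p i n a) * ∏ j ∈ d, Aj p i n j :=
        Ideal.mul_mem_mul (AjSq_le p i n a (hd a)) (Ideal.prod_mem_prod fun j _ => hr j)
      rwa [mul_assoc] at h1
    · have h2 : s' a * (∏ j ∈ d, r j - ∏ j ∈ d, s' j)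
          ∈ Aj p i n a * (augIdeal p i n * ∏ j ∈ d, Aj p i n j) :=
        Ideal.mul_mem_mul (hs a) ih
      rwa [mul_left_comm] at h2

end Aux3

section Aux4
variable (p : ℕ) [Fact p.Prime] (i : ℕ) (n : Fin i → ℕ)
local notation "R" => MonoidAlgebra ℤ_[p] (Hgrp p i n)

lemma eH_prod (σ : Hgrp p i n) :
    eH p i n σ = ∏ j, eH p i n (Pi.mulSingle j (σ j)) := by
  rw [← map_prod, Finset.univ_prod_mulSingle]

lemma smul_prod_aux (c : Fin i → ℤ_[p]) (f : Fin i → R) :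
    ∏ j, (c j • f j) = (∏ j, c j) • ∏ j, f j := by
  simp only [Algebra.smul_def, Finset.prod_mul_distrib, map_prod]

lemma sigmaGen_pow (j : Fin i) (m : ℕ) :
    (sigmaGen p j : Hgrp p i n) ^ m
      = Pi.mulSingle j (Multiplicative.ofAdd ((m : ZMod (p ^ n j)))) := by
  rw [sigmaGen, ← Pi.mulSingle_pow]
  congr 1
  rw [← ofAdd_nsmul]
  congr 1
  simp

end Aux4


section Aux5
variable (p : ℕ) [Fact p.Prime] (i : ℕ) (n : Fin i → ℕ)
local notation "R" => MonoidAlgebra ℤ_[p] (Hgrp p i n)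

lemma Dj_eq (j : Fin i) :
    ∑ m ∈ Finset.range (p ^ n j),
      (m : ℤ_[p]) • MonoidAlgebra.of ℤ_[p] (Hgrp p i n) ((sigmaGen p j) ^ m)
    = ∑ t : Multiplicative (ZMod (p ^ n j)),
      (((Multiplicative.toAdd t).val : ℕ) : ℤ_[p]) • eH p i n (Pi.mulSingle j t) := by
  refine Finset.sum_nbij' (fun m => Multiplicative.ofAdd ((m : ZMod (p ^ n j))))
    (fun t => (Multiplicative.toAdd t).val) ?_ ?_ ?_ ?_ ?_
  · intro a _; exact Finset.mem_univ _
  · intro t _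
    exact Finset.mem_range.mpr (ZMod.val_lt _)
  · intro a ha
    simp only [toAdd_ofAdd]
    exact ZMod.val_cast_of_lt (Finset.mem_range.mp ha)
  · intro t _
    simp [ZMod.natCast_val, ZMod.cast_id]
  · intro a ha
    rw [sigmaGen_pow]
    congr 1
    simp only [toAdd_ofAdd]
    rw [ZMod.val_cast_of_lt (Finset.mem_range.mp ha)]

lemma Dop_eq :
    Dop p i n = ∑ σ : Hgrp p i n,
      (∏ j, (((Multiplicative.toAdd (σ j)).val : ℕ) : ℤ_[p])) • eH p i n σ := by
  rw [Dop]
  have h1 : ∀ j : Fin i, (∑ m ∈ Finset.range (p ^ n j),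
      (m : ℤ_[p]) • MonoidAlgebra.of ℤ_[p] (Hgrp p i n) ((sigmaGen p j) ^ m))
      = ∑ t : Multiplicative (ZMod (p ^ n j)),
        (((Multiplicative.toAdd t).val : ℕ) : ℤ_[p]) • eH p i n (Pi.mulSingle j t) :=
    Dj_eq p i n
  rw [Finset.prod_congr rfl fun j _ => h1 j]
  rw [Finset.prod_univ_sum]
  rw [Fintype.piFinset_univ]
  apply Finset.sum_congr rfl
  intro σ _
  rw [smul_prod_aux, ← eH_prod]

end Aux5
section Aux6
variable (p : ℕ) [Fact p.Prime] (i : ℕ) (n : Fin i → ℕ)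
local notation "R" => MonoidAlgebra ℤ_[p] (Hgrp p i n)

lemma sTilde_of (τ : Hgrp p i n) :
    (∑ d : Finset (Fin i), ((-1 : ℤ_[p]) ^ (i - d.card)) •
      MonoidAlgebra.mapDomainRingHom ℤ_[p] (projD p d)
        (MonoidAlgebra.of ℤ_[p] (Hgrp p i n) τ))
    = ∏ j, (eH p i n (Pi.mulSingle j (τ j)) - 1) := by
  have h1 : ∀ d : Finset (Fin i),
      MonoidAlgebra.mapDomainRingHom ℤ_[p] (projD p d)
        (MonoidAlgebra.of ℤ_[p] (Hgrp p i n) τ)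
      = ∏ j ∈ d, eH p i n (Pi.mulSingle j (τ j)) := by
    intro d
    have e1 : MonoidAlgebra.mapDomainRingHom ℤ_[p] (projD p d)
        (MonoidAlgebra.of ℤ_[p] (Hgrp p i n) τ) = eH p i n (projD p d τ) := by
      show MonoidAlgebra.mapDomain (projD p d) (MonoidAlgebra.single τ (1 : ℤ_[p])) = _
      rw [MonoidAlgebra.mapDomain_single]
      rfl
    rw [e1, eH_prod]
    calc ∏ j, eH p i n (Pi.mulSingle j ((projD p d τ) j))
        = ∏ j, (if j ∈ d then eH p i n (Pi.mulSingle j (τ j)) else 1) := by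
          apply Finset.prod_congr rfl
          intro j _
          by_cases hj : j ∈ d
          · simp only [hj, if_true]
            congr 1
            have hval : (projD p d τ) j = τ j := by simp [projD, hj]
            rw [hval]
          · simp only [hj, if_false]
            have hval : (projD p d τ) j = 1 := by simp [projD, hj]
            rw [hval, Pi.mulSingle_one, map_one]
      _ = ∏ j ∈ d, eH p i n (Pi.mulSingle j (τ j)) := Fintype.prod_ite_mem d _
  simp_rw [h1]
  have h2 : ∀ j, eH p i n (Pi.mulSingle j (τ j)) - 1
      = eH p i n (Pi.mulSingle j (τ j)) + (-1) := by
    intro j; ring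
  rw [Finset.prod_congr rfl fun j _ => h2 j, Finset.prod_add, ← Finset.powerset_univ]
  apply Finset.sum_congr rfl
  intro d hd
  rw [Finset.prod_const, Finset.card_sdiff_of_subset (Finset.mem_powerset.mp hd), Finset.card_univ,
    Fintype.card_fin, Algebra.smul_def, map_pow, map_neg, map_one, mul_comm]

end Aux6
section Main
variable (p : ℕ) [Fact p.Prime] (i : ℕ) (n : Fin i → ℕ)
local notation "R" => MonoidAlgebra ℤ_[p] (Hgrp p i n)

lemma Jcirc_eq : Jcirc p i n = ∏ j, Aj p i n j := rfl
lemma augIdeal_eq : augIdeal p i n = augIdeal p i n := rfl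
lemma Dop_eq' : Dop p i n = Dop p i n := rfl

lemma sTilde_of_real (τ : Hgrp p i n) :
    sTilde p i n (MonoidAlgebra.of ℤ_[p] (Hgrp p i n) τ)
    = ∏ j, (eH p i n (Pi.mulSingle j (τ j)) - 1) :=
  sTilde_of p i n τ

lemma prod_neg_aux (v : Fin i → ℤ_[p]) :
    ∏ j, (-(v j)) = (-1 : ℤ_[p]) ^ i * ∏ j, v j := by
  induction i with
  | zero => simp
  | succ k ih =>
    rw [Fin.prod_univ_succ, Fin.prod_univ_succ, ih (fun j => v j.succ), pow_succ]
    ring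

lemma claimA (σ : Hgrp p i n) :
    sTilde p i n (MonoidAlgebra.of ℤ_[p] (Hgrp p i n) σ⁻¹)
      - (∏ j, -(((Multiplicative.toAdd (σ j)).val : ℕ) : ℤ_[p])) •
        (∏ j : Fin i, (MonoidAlgebra.of ℤ_[p] (Hgrp p i n) (sigmaGen p j) - 1))
    ∈ augIdeal p i n * Jcirc p i n := by
  rw [sTilde_of_real, Jcirc_eq]
  rw [show ((∏ j, -(((Multiplicative.toAdd (σ j)).val : ℕ) : ℤ_[p])) •
        (∏ j : Fin i, (MonoidAlgebra.of ℤ_[p] (Hgrp p i n) (sigmaGen p j) - 1)))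
      = ∏ j, ((-(((Multiplicative.toAdd (σ j)).val : ℕ) : ℤ_[p])) •
        (eH p i n (sigmaGen p j) - 1)) from (smul_prod_aux p i n _ _).symm]
  apply prodCongr
  · intro j; exact gen_mem_Aj p i n j _
  · intro j
    rw [show (eH p i n (sigmaGen p j) : MonoidAlgebra ℤ_[p] (Hgrp p i n))
      = eH p i n (Pi.mulSingle j (Multiplicative.ofAdd (1 : ZMod (p ^ n j)))) from rfl]
    rw [Algebra.smul_def]
    exact Ideal.mul_mem_left _ _ (gen_mem_Aj p i n j (Multiplicative.ofAdd 1))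
  · intro j
    rw [neg_smul, sub_neg_eq_add]
    exact keyInv p i n j σ


/-- For any `R = ℤ_p[H]`-module `X` and `x ∈ X`, the map `id_X ⊗ s` on
`X ⊗_{ℤ_p} (R/I_H J°)` sends `Σ_{σ ∈ H} σx ⊗ σ⁻¹` to `(−1)^i · Dx ⊗ ∏_{j=1}^i (σ_j − 1)`;
equivalently, their difference (computed in `X ⊗_{ℤ_p} R`) lies in `X ⊗ I_H J°`. -/
theorem kolyvagin_operator_identity
    (p : ℕ) [Fact p.Prime] (i : ℕ) (n : Fin i → ℕ)
    {X : Type} [AddCommGroup X] [Module (MonoidAlgebra ℤ_[p] (Hgrp p i n)) X]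
    [Module ℤ_[p] X] [IsScalarTower ℤ_[p] (MonoidAlgebra ℤ_[p] (Hgrp p i n)) X]
    (x : X) :
    (∑ σ : Hgrp p i n,
        ((MonoidAlgebra.of ℤ_[p] (Hgrp p i n) σ • x) ⊗ₜ[ℤ_[p]]
          sTilde p i n (MonoidAlgebra.of ℤ_[p] (Hgrp p i n) σ⁻¹)))
      - (-1 : ℤ_[p]) ^ i •
        ((Dop p i n • x) ⊗ₜ[ℤ_[p]]
          ∏ j : Fin i, (MonoidAlgebra.of ℤ_[p] (Hgrp p i n) (sigmaGen p j) - 1))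
      ∈ LinearMap.range (TensorProduct.map (LinearMap.id : X →ₗ[ℤ_[p]] X)
          (((augIdeal p i n * Jcirc p i n).restrictScalars ℤ_[p]).subtype)) := by
  classical
  set P : MonoidAlgebra ℤ_[p] (Hgrp p i n) :=
    ∏ j : Fin i, (MonoidAlgebra.of ℤ_[p] (Hgrp p i n) (sigmaGen p j) - 1) with hP
  set T : Hgrp p i n → X := fun σ => MonoidAlgebra.of ℤ_[p] (Hgrp p i n) σ • x with hT
  set c : Hgrp p i n → ℤ_[p] :=
    fun σ => ∏ j, -(((Multiplicative.toAdd (σ j)).val : ℕ) : ℤ_[p]) with hc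
  have hDx : Dop p i n • x
      = ∑ σ : Hgrp p i n,
          (∏ j, (((Multiplicative.toAdd (σ j)).val : ℕ) : ℤ_[p])) • T σ := by
    rw [Dop_eq', Dop_eq, Finset.sum_smul]
    exact Finset.sum_congr rfl fun σ _ => smul_assoc _ _ _
  have hRHS : (-1 : ℤ_[p]) ^ i • ((Dop p i n • x) ⊗ₜ[ℤ_[p]] P)
      = ∑ σ : Hgrp p i n, T σ ⊗ₜ[ℤ_[p]] (c σ • P) := by
    rw [hDx, TensorProduct.sum_tmul, Finset.smul_sum]
    apply Finset.sum_congr rfl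
    intro σ _
    rw [TensorProduct.smul_tmul', smul_smul, TensorProduct.smul_tmul]
    congr 1
    simp only [hc]
    rw [prod_neg_aux]
  rw [hRHS, ← Finset.sum_sub_distrib]
  apply Submodule.sum_mem
  intro σ _
  have hw : sTilde p i n (MonoidAlgebra.of ℤ_[p] (Hgrp p i n) σ⁻¹) - c σ • P
      ∈ (augIdeal p i n * Jcirc p i n).restrictScalars ℤ_[p] := claimA p i n σ
  rw [← TensorProduct.tmul_sub]
  exact ⟨T σ ⊗ₜ[ℤ_[p]] (⟨_, hw⟩ :
      ((augIdeal p i n * Jcirc p i n).restrictScalars ℤ_[p])), rfl⟩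
end Main
end

section
/- Let O ⊆ O' be an extension of complete DVRs with O' finite free over O, and let R, R' be the group rings R = (O/π^N O)[G] and R' = (O'/π'^{eN} O')[G] for a finite abelian group G, where e is the ramification index so that R' ≅ O' ⊗_O R is free over R with basis the image of an O-basis of O'. Let M be an R-module, κ ∈ M fixed, and f : O' ⊗_O M → R' an R'-linear map. Then there exist R-linear maps g_1, …, g_n : M → R (n = rank_O O') and a basis b_1, …, b_n of R' over R such that f(1 ⊗ κ) = Σ_i b_i · g_i(κ). In particular, the ideal of R' generated by {f(1⊗κ) : f ∈ Hom_{R'}(O'⊗_O M, R')} equals R'·{g(κ) : g ∈ Hom_R(M, R)}. -/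
open TensorProduct

/-- Abstract form (as used for `R = (O/π^N O)[G]` and `R' = (O'/π'^{eN} O')[G] ≅ O' ⊗_O R`):
let `R` be a commutative ring which is injective as a module over itself, and `R'` an
`R`-algebra that is free over `R` with finite basis `b` (the image of an `O`-basis of
`O'`).  Let `M` be an `R`-module, `κ ∈ M`, and `f : R' ⊗_R M → R'` an `R'`-linear map.
Then there exist `R`-linear maps `g₁, …, g_n : M → R` with
`f (1 ⊗ κ) = Σ_i g_i(κ) • b_i`.  In particular, the ideal of `R'` generated by
`{f (1 ⊗ κ)}` over all `f` equals the ideal of `R'` generated by the image of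
`{g(κ) : g ∈ Hom_R(M, R)}`. -/
theorem tensor_dual_basis_expansion
    {R R' : Type*} [CommRing R] [CommRing R'] [Algebra R R']
    [Module.Injective R R] {nb : ℕ} (b : Module.Basis (Fin nb) R R')
    {M : Type*} [AddCommGroup M] [Module R M] (κ : M)
    (f : (R' ⊗[R] M) →ₗ[R'] R') :
    (∃ g : Fin nb → (M →ₗ[R] R), f ((1 : R') ⊗ₜ[R] κ) = ∑ j : Fin nb, g j κ • b j) ∧
    Ideal.span {x : R' | ∃ f' : (R' ⊗[R] M) →ₗ[R'] R', x = f' ((1 : R') ⊗ₜ[R] κ)}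
      = Ideal.span ((algebraMap R R') '' {y : R | ∃ g : M →ₗ[R] R, y = g κ}) := by
  -- the R-linear map m ↦ f (1 ⊗ m)
  let F : M →ₗ[R] R' :=
    (f.restrictScalars R).comp ((TensorProduct.mk R R' M) 1)
  -- the coordinate functions give the gᵢ
  have hexp : ∀ (h : M →ₗ[R] R') (m : M),
      ∃ g : Fin nb → (M →ₗ[R] R), h m = ∑ j : Fin nb, g j m • b j := by
    intro h m
    refine ⟨fun j => (b.coord j).comp h, ?_⟩
    simpa using (b.sum_repr (h m)).symm
  obtain ⟨g, hg⟩ := hexp F κ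
  refine ⟨⟨g, hg⟩, ?_⟩
  apply le_antisymm
  · rw [Ideal.span_le]
    rintro x ⟨f', rfl⟩
    let F' : M →ₗ[R] R' :=
      (f'.restrictScalars R).comp ((TensorProduct.mk R R' M) 1)
    obtain ⟨g', hg'⟩ := hexp F' κ
    show f' ((1 : R') ⊗ₜ[R] κ) ∈ _
    have : f' ((1 : R') ⊗ₜ[R] κ) = F' κ := rfl
    rw [this, hg']
    refine Ideal.sum_mem _ fun j _ => ?_
    rw [Algebra.smul_def]
    exact Ideal.mul_mem_right _ _ (Ideal.subset_span ⟨g' j κ, ⟨g' j, rfl⟩, rfl⟩)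
  · rw [Ideal.span_le]
    rintro x ⟨y, ⟨g', rfl⟩, rfl⟩
    refine Ideal.subset_span ⟨LinearMap.liftBaseChange R'
      ((Algebra.linearMap R R').comp g'), ?_⟩
    simp [LinearMap.liftBaseChange_tmul]
end

section
/- Let O be a complete DVR, Λ = O[[T]] or O[[T_1,T_2]], and M a finitely generated torsion Λ-module pseudo-isomorphic to an elementary module E = ⊕_{j=1}^r Λ/d_jΛ with d_{j+1} | d_j for all j. Then for each i ≥ 0, Fitt_{Λ,i}(M) and the principal ideal (∏_{j=i+1}^r d_j) agree up to multiplication by ideals of height at least two; i.e. there exist ideals A, B of Λ of height ≥ 2 with A·Fitt_{Λ,i}(M) ⊆ (∏_{j>i} d_j) and B·(∏_{j>i} d_j) ⊆ Fitt_{Λ,i}(M). In particular, the equivalence classes of the higher Fitting ideals determine the pseudo-isomorphism class of M. -/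
/-- The ideal `I` has height at least `n`. -/
def heightGE {R : Type*} [CommRing R] (I : Ideal R) (n : ℕ) : Prop :=
  ∀ P : Ideal R, P.IsPrime → I ≤ P →
    ∃ c : Fin n → Ideal R, (∀ j, (c j).IsPrime) ∧ StrictMono c ∧ ∀ j, c j < P

lemma strictMono_le_apply_nat {t r : ℕ} (G : Fin t → Fin r) (hG : StrictMono G) :
    ∀ m (hm : m < t), m ≤ (G ⟨m, hm⟩ : ℕ) := by
  intro m
  induction m with
  | zero => exact fun _ => Nat.zero_le _
  | succ m ih =>
    intro hm
    have h1 := ih (Nat.lt_of_succ_lt hm)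
    have h2 : G ⟨m, Nat.lt_of_succ_lt hm⟩ < G ⟨m + 1, hm⟩ := hG (by simp [Fin.lt_def])
    rw [Fin.lt_def] at h2
    omega

lemma strictMono_le_apply' {t r : ℕ} (G : Fin t → Fin r) (hG : StrictMono G)
    (l : Fin t) : (l : ℕ) ≤ (G l : ℕ) := by
  have := strictMono_le_apply_nat G hG l l.2
  simpa using this

lemma strictMono_apply_le {t r : ℕ} (G : Fin t → Fin r) (hG : StrictMono G)
    (l : Fin t) : (G l : ℕ) ≤ r - t + l := by
  have hG' : StrictMono (fun l : Fin t => (G l.rev).rev) := by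
    intro a b hab
    exact Fin.rev_lt_rev.mpr (hG (Fin.rev_lt_rev.mpr hab))
  have := strictMono_le_apply' _ hG' l.rev
  simp only [Fin.rev_rev] at this
  rw [Fin.val_rev, Fin.val_rev] at this
  have h1 : (l : ℕ) < t := l.2
  have h2 : (G l : ℕ) < r := (G l).2
  omega

lemma div_lemma {Λ : Type*} [CommRing Λ] {r : ℕ} (d : Fin r → Λ)
    (hd : ∀ j k : Fin r, j ≤ k → d k ∣ d j) (i : ℕ) (B : Finset (Fin r))
    (hB : r - i ≤ B.card) :
    (∏ j ∈ Finset.univ.filter (fun j : Fin r => i ≤ (j : ℕ)), d j) ∣ ∏ j ∈ B, d j := by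
  set t := B.card with ht
  have htr : t ≤ r := by
    have := Finset.card_le_univ B
    simpa [Finset.card_univ] using this
  set F := B.orderIsoOfFin rfl with hF
  set G : Fin t → Fin r := fun l => (F l : Fin r) with hGdef
  have hG : StrictMono G := fun a b hab => by
    simpa [hGdef] using (F.lt_iff_lt.mpr hab)
  have high := strictMono_apply_le G hG
  have hltr : ∀ l : Fin t, r - t + (l : ℕ) < r := fun l => by
    have := l.2; omega
  set H : Fin t → Fin r := fun l => ⟨r - t + (l : ℕ), hltr l⟩ with hH
  have step1 : (∏ j ∈ Finset.univ.filter (fun j : Fin r => i ≤ (j : ℕ)), d j) ∣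
      ∏ j ∈ Finset.univ.filter (fun j : Fin r => r - t ≤ (j : ℕ)), d j := by
    apply Finset.prod_dvd_prod_of_subset
    intro j hj
    simp only [Finset.mem_filter, Finset.mem_univ, true_and] at hj ⊢
    omega
  refine step1.trans ?_
  have e2 : ∏ j ∈ B, d j = ∏ l : Fin t, d (G l) := by
    rw [← Finset.prod_attach B d]
    exact (Equiv.prod_comp F.toEquiv (fun x => d (x : Fin r))).symm
  have e1 : ∏ j ∈ Finset.univ.filter (fun j : Fin r => r - t ≤ (j : ℕ)), d j
      = ∏ l : Fin t, d (H l) := by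
    have hmemt : ∀ j : Fin r, r - t ≤ (j : ℕ) → (j : ℕ) - (r - t) < t := fun j hj => by
      have := j.2; omega
    refine (Finset.prod_bij (fun (l : Fin t) (_ : l ∈ Finset.univ) => H l) ?_ ?_ ?_ ?_).symm
    · intro a _
      simp only [Finset.mem_filter, Finset.mem_univ, true_and, hH]
      omega
    · intro a _ b _ hab
      simp only [hH, Fin.mk.injEq] at hab
      exact Fin.ext (by omega)
    · intro b hb
      simp only [Finset.mem_filter, Finset.mem_univ, true_and] at hb
      refine ⟨⟨(b : ℕ) - (r - t), hmemt b hb⟩, Finset.mem_univ _, ?_⟩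
      simp only [hH]
      exact Fin.ext (by simp; omega)
    · intro a _; rfl
  rw [e1, e2]
  apply Finset.prod_dvd_prod_of_dvd
  intro l _
  refine hd (G l) (H l) ?_
  rw [Fin.le_def]
  exact high l

open Matrix in
lemma acore {Λ : Type*} [CommRing Λ] {r n i : ℕ} (d : Fin r → Λ)
    (hd : ∀ j k : Fin r, j ≤ k → d k ∣ d j)
    (h : (Fin n → Λ) →ₗ[Λ] ((j : Fin r) → Λ ⧸ Ideal.span {d j}))
    (b : Λ)
    (hb : ∀ j : Fin r, ∃ w : Fin n → Λ,
      h w = fun j' => Ideal.Quotient.mk (Ideal.span {d j'}) ((Pi.single j b : Fin r → Λ) j'))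
    (v : Fin (n - i) → Fin n → Λ) (hv : ∀ a, h (v a) = 0) (c : Fin (n - i) → Fin n) :
    b ^ r * Matrix.det (Matrix.of fun a b' => v a (c b'))
      ∈ Ideal.span {∏ j ∈ Finset.univ.filter (fun j : Fin r => i ≤ (j : ℕ)), d j} := by
  classical
  set D := ∏ j ∈ Finset.univ.filter (fun j : Fin r => i ≤ (j : ℕ)), d j with hD
  have hsur : ∀ (k : Fin n) (j : Fin r), ∃ z : Λ,
      Ideal.Quotient.mk (Ideal.span {d j}) z = h (Pi.single k 1) j := fun k j =>
    Ideal.Quotient.mk_surjective _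
  choose φ hφ using hsur
  have KI : ∀ (y : Fin n → Λ) (j : Fin r),
      h y j = Ideal.Quotient.mk (Ideal.span {d j}) (∑ k, y k * φ k j) := by
    intro y j
    have hy : y = ∑ k, y k • (Pi.single k (1 : Λ) : Fin n → Λ) := by
      funext j'
      simp [Pi.single_apply, Finset.sum_apply]
    conv_lhs => rw [hy]
    rw [map_sum, Finset.sum_apply, map_sum]
    refine Finset.sum_congr rfl (fun k _ => ?_)
    rw [_root_.map_smul, Pi.smul_apply, ← hφ k j]
    rfl
  have dvd1 : ∀ a j, d j ∣ ∑ k, v a k * φ k j := by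
    intro a j
    have := congrFun (hv a) j
    rw [KI] at this
    rw [← Ideal.mem_span_singleton, ← Ideal.Quotient.eq_zero_iff_mem]
    simpa using this
  choose w hw using hb
  have dvd2 : ∀ j j', d j' ∣ ((Pi.single j b : Fin r → Λ) j' - ∑ k, w j k * φ k j') := by
    intro j j'
    rw [← Ideal.mem_span_singleton, ← Ideal.Quotient.eq_zero_iff_mem]
    have h1 := congrFun (hw j) j'
    rw [KI] at h1
    rw [map_sub, h1, sub_self]
  choose lam hlam using fun a j => dvd1 a j
  choose mu hmu using fun j j' => dvd2 j j'
  set Cpos : Fin (n - i) ⊕ Fin r → Fin n ⊕ Fin r :=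
    Sum.elim (fun a => Sum.inl (c a)) Sum.inr with hCpos
  set gen : Fin n ⊕ Fin r → (Fin n ⊕ Fin r → Λ) := Sum.elim
    (fun k => Sum.elim (Pi.single k 1) (fun j => -φ k j))
    (fun j => Pi.single (Sum.inr j) (d j)) with hgen
  set coef : Fin (n - i) ⊕ Fin r → Fin n ⊕ Fin r → Λ := Sum.elim
    (fun a => Sum.elim (v a) (fun j => lam a j))
    (fun j => Sum.elim (fun k => -(w j k)) (fun j' => mu j j')) with hcoef
  set ρ : Fin (n - i) ⊕ Fin r → (Fin n ⊕ Fin r → Λ) := Sum.elim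
    (fun a => Sum.elim (v a) 0)
    (fun j => Sum.elim (fun k => -(w j k)) (Pi.single j b)) with hρ
  have rowdec : ∀ t, ρ t = fun pos => ∑ u : Fin n ⊕ Fin r, coef t u * gen u pos := by
    intro t
    funext pos
    cases t with
    | inl a =>
      cases pos with
      | inl k' =>
        simp only [hρ, hcoef, hgen, Sum.elim_inl, Sum.elim_inr, Fintype.sum_sum_type]
        simp [Pi.single_apply, mul_ite, Finset.sum_ite_eq]
      | inr j' =>
        simp only [hρ, hcoef, hgen, Sum.elim_inl, Sum.elim_inr, Fintype.sum_sum_type,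
          Pi.zero_apply]
        simp only [Pi.single_apply, Sum.inr.injEq, mul_ite, mul_zero,
          Finset.sum_ite_eq, Finset.mem_univ, if_true]
        have hneg : ∑ k, v a k * -φ k j' = -(∑ k, v a k * φ k j') := by
          rw [← Finset.sum_neg_distrib]
          exact Finset.sum_congr rfl (fun k _ => by ring)
        rw [hneg, hlam a j']
        ring
    | inr j =>
      cases pos with
      | inl k' =>
        simp only [hρ, hcoef, hgen, Sum.elim_inl, Sum.elim_inr, Fintype.sum_sum_type]
        simp [Pi.single_apply, mul_ite, Finset.sum_ite_eq]
      | inr j' =>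
        simp only [hρ, hcoef, hgen, Sum.elim_inl, Sum.elim_inr, Fintype.sum_sum_type]
        simp only [Pi.single_apply, Sum.inr.injEq, mul_ite, mul_zero,
          Finset.sum_ite_eq, Finset.mem_univ, if_true]
        have hneg : ∑ k, -w j k * -φ k j' = ∑ k, w j k * φ k j' := by
          exact Finset.sum_congr rfl (fun k _ => by ring)
        rw [hneg]
        have hmu' : (if j' = j then b else 0) - ∑ k, w j k * φ k j' = d j' * mu j j' := by
          simpa [Pi.single_apply] using hmu j j'
        linear_combination hmu'
  set genC : Fin n ⊕ Fin r → (Fin (n - i) ⊕ Fin r → Λ) :=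
    fun u => (fun s => gen u (Cpos s)) with hgenC
  set X : Matrix (Fin (n - i) ⊕ Fin r) (Fin (n - i) ⊕ Fin r) Λ :=
    Matrix.of (fun t s => ρ t (Cpos s)) with hX
  have hXdet : X.det = Matrix.det (Matrix.of fun a b' => v a (c b')) * b ^ r := by
    have hXblocks : X = Matrix.fromBlocks (Matrix.of fun a a' => v a (c a'))
        0 (Matrix.of fun j a' => -(w j (c a'))) (Matrix.diagonal (fun _ : Fin r => b)) := by
      ext t s
      cases t with
      | inl a =>
        cases s with
        | inl a' => rfl
        | inr j' => rfl
      | inr j =>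
        cases s with
        | inl a' => rfl
        | inr j' =>
          show (Pi.single j b : Fin r → Λ) j' = Matrix.diagonal (fun _ : Fin r => b) j j'
          simp [Pi.single_apply, Matrix.diagonal, eq_comm]
    rw [hXblocks, Matrix.det_fromBlocks_zero₁₂, Matrix.det_diagonal]
    simp
  have key : X.det ∈ Ideal.span {D} := by
    have h0 : X.det = (Matrix.detRowAlternating (R := Λ)
        (n := Fin (n - i) ⊕ Fin r)).toMultilinearMap (fun t => X t) := rfl
    have hXrow : (fun t => X t)
        = fun t => ∑ u : Fin n ⊕ Fin r, coef t u • genC u := by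
      funext t
      rw [show X t = ρ t ∘ Cpos from rfl, rowdec t]
      funext s
      simp [hgenC, Finset.sum_apply]
    rw [h0, hXrow, MultilinearMap.map_sum]
    refine Ideal.sum_mem _ (fun p _ => ?_)
    rw [MultilinearMap.map_smul_univ]
    refine Submodule.smul_mem _ _ ?_
    by_cases hinj : Function.Injective p
    · -- injective case
      set σ : Fin (n - i) ⊕ Fin r → Λ :=
        fun t => Sum.elim (fun _ : Fin n => (1 : Λ)) d (p t) with hσ
      set base : Fin (n - i) ⊕ Fin r → (Fin (n - i) ⊕ Fin r → Λ) :=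
        fun t => Sum.elim (fun k : Fin n => genC (Sum.inl k))
          (fun j : Fin r => (fun s => Sum.elim (0 : Fin n → Λ)
            (Pi.single j (1 : Λ)) (Cpos s))) (p t) with hbase
      have hfac : (fun t => genC (p t)) = fun t => σ t • base t := by
        funext t
        rcases hp : p t with k | j
        · simp [hσ, hbase, hp]
        · funext s
          simp only [hσ, hbase, hp, Sum.elim_inr, Pi.smul_apply, smul_eq_mul, hgenC, hgen]
          rcases hs : Cpos s with x | j'
          · simp
          · simp [Pi.single_apply, Sum.inr.injEq, mul_ite]
      rw [hfac, MultilinearMap.map_smul_univ]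
      have hprodmem : (∏ t, σ t) ∈ Ideal.span {D} := by
        set S : Finset (Fin n ⊕ Fin r) := Finset.univ.image p with hS
        have e0 : ∏ t, σ t = ∏ u ∈ S, Sum.elim (fun _ : Fin n => (1 : Λ)) d u := by
          rw [hS, Finset.prod_image (fun a _ b _ hab => hinj hab)]
        set P : Fin n ⊕ Fin r → Prop := fun u => u.isLeft = true with hP
        set B : Finset (Fin r) := Finset.univ.filter (fun j : Fin r => Sum.inr j ∈ S) with hB
        have himg : B.image Sum.inr = S.filter (fun u => ¬ P u) := by
          ext u
          rcases u with x | j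
          · simp [hP]
          · simp [hB, hP]
        have e1 : ∏ u ∈ S, Sum.elim (fun _ : Fin n => (1 : Λ)) d u = ∏ j ∈ B, d j := by
          rw [← Finset.prod_filter_mul_prod_filter_not S P]
          have left1 : ∏ u ∈ S.filter P, Sum.elim (fun _ : Fin n => (1 : Λ)) d u = 1 := by
            refine Finset.prod_eq_one (fun u hu => ?_)
            rcases u with x | j
            · rfl
            · simp only [Finset.mem_filter, hP] at hu
              exact absurd hu.2 (by simp)
          rw [left1, one_mul, ← himg,
            Finset.prod_image (fun a _ b _ hab => Sum.inr_injective hab)]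
          rfl
        have hcard : r - i ≤ B.card := by
          have h1 : S.card = (n - i) + r := by
            rw [hS, Finset.card_image_of_injective _ hinj, Finset.card_univ]
            simp
          have h2 : (S.filter P).card ≤ n := by
            have hsub : S.filter P ⊆ Finset.univ.image (Sum.inl : Fin n → Fin n ⊕ Fin r) := by
              intro u hu
              simp only [Finset.mem_filter, hP] at hu
              rcases u with x | j
              · simp
              · exact absurd hu.2 (by simp)
            calc (S.filter P).card ≤ _ := Finset.card_le_card hsub
              _ = n := by
                rw [Finset.card_image_of_injective _ Sum.inl_injective, Finset.card_univ]
                simp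
          have h3 : (S.filter P).card + (S.filter (fun u => ¬ P u)).card = S.card :=
            Finset.card_filter_add_card_filter_not (p := P)
          have h4 : B.card = (S.filter (fun u => ¬ P u)).card := by
            rw [← himg, Finset.card_image_of_injective _ Sum.inr_injective]
          omega
        rw [e0, e1]
        exact Ideal.mem_span_singleton.mpr (div_lemma d hd i B hcard)
      rw [smul_eq_mul]
      exact Ideal.mul_mem_right _ _ hprodmem
    · obtain ⟨t1, t2, hpt, hne⟩ := Function.not_injective_iff.mp hinj
      have hz : Matrix.detRowAlternating (fun t => genC (p t)) = 0 :=
        AlternatingMap.map_eq_zero_of_eq _ _ (by rw [hpt]) hne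
      show Matrix.detRowAlternating (fun t => genC (p t)) ∈ _
      rw [hz]
      exact Ideal.zero_mem _
  rw [mul_comm, ← hXdet]
  exact key

lemma mem_fittingIdeal_of {R M : Type*} [CommRing R] [AddCommGroup M] [Module R M]
    {i n : ℕ} (g : (Fin n → R) →ₗ[R] M) (hg : Function.Surjective g)
    (v : Fin (n - i) → Fin n → R) (c : Fin (n - i) → Fin n) (hv : ∀ a, g (v a) = 0) :
    Matrix.det (Matrix.of fun a b => v a (c b)) ∈ fittingIdeal R M i := by
  have hle : Ideal.span {x | ∃ (v : Fin (n - i) → Fin n → R) (c : Fin (n - i) → Fin n),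
      (∀ a, g (v a) = 0) ∧ x = Matrix.det (Matrix.of fun a b => v a (c b))}
      ≤ fittingIdeal R M i :=
    le_iSup_of_le n (le_iSup_of_le g (le_iSup_of_le hg le_rfl))
  exact hle (Ideal.subset_span ⟨v, c, hv, rfl⟩)

lemma fittingIdeal_le {R M : Type*} [CommRing R] [AddCommGroup M] [Module R M]
    {i : ℕ} (J : Ideal R)
    (hJ : ∀ (n : ℕ) (g : (Fin n → R) →ₗ[R] M), Function.Surjective g →
      ∀ (v : Fin (n - i) → Fin n → R) (c : Fin (n - i) → Fin n), (∀ a, g (v a) = 0) →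
        Matrix.det (Matrix.of fun a b => v a (c b)) ∈ J) :
    fittingIdeal R M i ≤ J := by
  refine iSup_le fun n => iSup_le fun g => iSup_le fun hg => Ideal.span_le.mpr ?_
  rintro x ⟨v, c, hv, rfl⟩
  exact hJ n g hg v c hv

theorem aux_fitt {Λ : Type*} [CommRing Λ] {M : Type*} [AddCommGroup M] [Module Λ M]
    [Module.Finite Λ M] {r : ℕ} (d : Fin r → Λ)
    (hd : ∀ j k : Fin r, j ≤ k → d k ∣ d j)
    (f : M →ₗ[Λ] ((j : Fin r) → Λ ⧸ Ideal.span {d j}))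
    (hker : heightGE (Module.annihilator Λ (LinearMap.ker f)) 2)
    (hcoker : heightGE (Module.annihilator Λ
      ((((j : Fin r) → Λ ⧸ Ideal.span {d j}) ⧸ LinearMap.range f))) 2)
    (i : ℕ) :
    ∃ A B : Ideal Λ, heightGE A 2 ∧ heightGE B 2 ∧
      A * fittingIdeal Λ M i
        ≤ Ideal.span {∏ j ∈ Finset.univ.filter (fun j : Fin r => i ≤ (j : ℕ)), d j} ∧
      B * Ideal.span {∏ j ∈ Finset.univ.filter (fun j : Fin r => i ≤ (j : ℕ)), d j}
        ≤ fittingIdeal Λ M i := by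
  classical
  set D := ∏ j ∈ Finset.univ.filter (fun j : Fin r => i ≤ (j : ℕ)), d j with hD
  set annC := Module.annihilator Λ
    ((((j : Fin r) → Λ ⧸ Ideal.span {d j}) ⧸ LinearMap.range f)) with hannC
  set annK := Module.annihilator Λ (LinearMap.ker f) with hannK
  -- the standard generators of E
  set ebar : Fin r → ((j : Fin r) → Λ ⧸ Ideal.span {d j}) :=
    fun j => fun j' => Ideal.Quotient.mk (Ideal.span {d j'}) ((Pi.single j 1 : Fin r → Λ) j')
    with hebar
  have hbrange : ∀ b ∈ annC, ∀ j, b • ebar j ∈ LinearMap.range f := by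
    intro b hb j
    have h1 := Module.mem_annihilator.mp hb (Submodule.Quotient.mk (ebar j))
    rw [← Submodule.Quotient.mk_smul, Submodule.Quotient.mk_eq_zero] at h1
    exact h1
  have hbval : ∀ (b : Λ) (j : Fin r), b • ebar j
      = fun j' => Ideal.Quotient.mk (Ideal.span {d j'}) ((Pi.single j b : Fin r → Λ) j') := by
    intro b j
    funext j'
    have h2 : (Pi.single j b : Fin r → Λ) j' = b * (Pi.single j 1 : Fin r → Λ) j' := by
      simp [Pi.single_apply, mul_ite]
    show b • (ebar j j') = _
    rw [h2]
    rfl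
  obtain ⟨s, g₀, hg₀⟩ := Module.Finite.exists_fin' Λ M
  refine ⟨Ideal.span ((fun b => b ^ r) '' (annC : Set Λ)),
    Ideal.span {y | ∃ a ∈ annK, ∃ b ∈ annC, y = a ^ (s + (r - i)) * b ^ s}, ?_, ?_, ?_, ?_⟩
  · -- height of A
    intro P hP hle
    refine hcoker P hP (fun b hb => ?_)
    exact hP.mem_of_pow_mem r (hle (Ideal.subset_span ⟨b, hb, rfl⟩))
  · -- height of B
    intro P hP hle
    by_cases hK : annK ≤ P
    · exact hker P hP hK
    · obtain ⟨a, haK, haP⟩ := SetLike.not_le_iff_exists.mp hK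
      refine hcoker P hP (fun b hb => ?_)
      have hy : a ^ (s + (r - i)) * b ^ s ∈ P :=
        hle (Ideal.subset_span ⟨a, haK, b, hb, rfl⟩)
      rcases hP.mem_or_mem hy with h | h
      · exact absurd (hP.mem_of_pow_mem _ h) haP
      · exact hP.mem_of_pow_mem _ h
  · -- A-side inclusion
    have hA1 : ∀ b ∈ annC, fittingIdeal Λ M i
        ≤ (Ideal.span {D}).colon (Submodule.span Λ {b ^ r}) := by
      intro b hb
      refine fittingIdeal_le _ (fun n g hg v c hv => ?_)
      rw [Submodule.mem_colon_span_singleton, smul_eq_mul, mul_comm]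
      refine acore d hd (f.comp g) b ?_ v (fun a => by simp [hv a]) c
      intro j
      have hmem : b • ebar j ∈ LinearMap.range (f.comp g) := by
        have : LinearMap.range (f.comp g) = LinearMap.range f := by
          rw [LinearMap.range_comp, LinearMap.range_eq_top.mpr hg, Submodule.map_top]
        rw [this]
        exact hbrange b hb j
      obtain ⟨wj, hwj⟩ := hmem
      exact ⟨wj, by rw [hwj, hbval]⟩
    rw [Ideal.mul_le]
    intro y hy x hx
    refine Submodule.span_induction ?_ ?_ ?_ ?_ hy
    · rintro z ⟨b, hb, rfl⟩
      have := hA1 b hb hx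
      rw [Submodule.mem_colon_span_singleton, smul_eq_mul] at this
      rw [mul_comm]
      exact this
    · simp
    · intro z1 z2 _ _ h1 h2
      rw [add_mul]
      exact Ideal.add_mem _ h1 h2
    · intro c z _ hz
      rw [smul_mul_assoc]
      exact Submodule.smul_mem _ _ hz
  · -- B-side inclusion
    have claim : ∀ a ∈ annK, ∀ b ∈ annC,
        a ^ (s + (r - i)) * b ^ s * D ∈ fittingIdeal Λ M i := by
      intro a haK b hbC
      choose x hx using fun j => hbrange b hbC j
      have hμ0 : ∀ (k : Fin s) (j : Fin r), ∃ z : Λ,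
          Ideal.Quotient.mk (Ideal.span {d j}) z = f (g₀ (Pi.single k 1)) j :=
        fun k j => Ideal.Quotient.mk_surjective _
      choose μ hμ using hμ0
      set L : (Fin (s + r) → Λ) →ₗ[Λ] M :=
        (g₀.comp (LinearMap.funLeft Λ Λ (Fin.castAdd r))) +
          ∑ j : Fin r, (LinearMap.proj (Fin.natAdd s j)).smulRight (x j) with hLdef
      have hL : ∀ u : Fin (s + r) → Λ,
          L u = g₀ (fun k => u (Fin.castAdd r k)) + ∑ j, u (Fin.natAdd s j) • x j := by
        intro u
        simp only [hLdef, LinearMap.add_apply, LinearMap.coe_comp, Function.comp_apply,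
          LinearMap.coe_sum, Finset.sum_apply, LinearMap.smulRight_apply,
          LinearMap.proj_apply, LinearMap.funLeft_apply]
        rfl
      have hLsurj : Function.Surjective L := by
        intro m
        obtain ⟨u, hu⟩ := hg₀ m
        refine ⟨fun t => if h : (t : ℕ) < s then u ⟨t, h⟩ else 0, ?_⟩
        rw [hL]
        have h1 : (fun k : Fin s => if h : ((Fin.castAdd r k : Fin (s + r)) : ℕ) < s
            then u ⟨((Fin.castAdd r k : Fin (s + r)) : ℕ), h⟩ else 0) = u := by
          funext k
          rw [dif_pos (by simpa using k.2)]
          congr 1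
        have h2 : ∀ j : Fin r, ¬ (((Fin.natAdd s j : Fin (s + r)) : ℕ) < s) := by
          intro j; simp
        rw [h1]
        simp only [h2, dif_neg, not_false_iff, zero_smul, Finset.sum_const_zero, add_zero]
        exact hu
      -- rows of type M
      set rowM : Fin s → (Fin (s + r) → Λ) := fun k => fun t =>
        Sum.elim (Pi.single k (a * b) : Fin s → Λ)
          (fun j => -(a * μ k j)) (finSumFinEquiv.symm t) with hrowM
      have hrowM0 : ∀ k, L (rowM k) = 0 := by
        intro k
        rw [hL]
        have e1 : (fun k' => rowM k (Fin.castAdd r k')) = Pi.single k (a * b) := by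
          funext k'
          rw [hrowM]
          simp [finSumFinEquiv_symm_apply_castAdd]
        have e2 : ∀ j, rowM k (Fin.natAdd s j) = -(a * μ k j) := by
          intro j
          rw [hrowM]
          simp [finSumFinEquiv_symm_apply_natAdd]
        rw [e1]
        simp only [e2]
        have e3 : g₀ (Pi.single k (a * b)) = (a * b) • g₀ (Pi.single k 1) := by
          rw [← map_smul]
          congr 1
          funext k'
          simp [Pi.single_apply, mul_ite]
        rw [e3]
        have e4 : ∑ j, (-(a * μ k j)) • x j = -(a • ∑ j, μ k j • x j) := by
          rw [Finset.smul_sum, ← Finset.sum_neg_distrib]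
          refine Finset.sum_congr rfl (fun j _ => ?_)
          simp [neg_smul, smul_smul]
        rw [e4]
        have kerelt : b • g₀ (Pi.single k 1) - ∑ j, μ k j • x j ∈ LinearMap.ker f := by
          rw [LinearMap.mem_ker, map_sub, map_smul, map_sum]
          have e5 : ∑ j, f (μ k j • x j) = b • f (g₀ (Pi.single k 1)) := by
            have : ∀ j, f (μ k j • x j) = μ k j • (b • ebar j) := by
              intro j; rw [map_smul, hx j]
            simp only [this]
            funext j'
            rw [Finset.sum_apply, Pi.smul_apply]
            have e6 : ∀ j, (μ k j • (b • ebar j)) j'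
                = Ideal.Quotient.mk (Ideal.span {d j'})
                    (μ k j * ((Pi.single j b : Fin r → Λ) j')) := by
              intro j
              rw [hbval b j]
              rfl
            simp only [e6]
            rw [← map_sum]
            have e7 : ∑ j, μ k j * (Pi.single j b : Fin r → Λ) j' = b * μ k j' := by
              simp only [Pi.single_apply, mul_ite, mul_zero, Finset.sum_ite_eq,
                Finset.mem_univ, if_true]
              ring
            rw [e7]
            have : b • f (g₀ (Pi.single k 1)) j'
                = Ideal.Quotient.mk (Ideal.span {d j'}) (b * μ k j') := by
              rw [← hμ k j']
              rfl
            rw [this]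
          rw [e5, sub_self]
        have := Module.mem_annihilator.mp haK ⟨_, kerelt⟩
        have hz : a • (b • g₀ (Pi.single k 1) - ∑ j, μ k j • x j) = 0 :=
          congrArg Subtype.val this
        rw [smul_sub, sub_eq_zero, smul_smul] at hz
        rw [hz]
        simp
      -- rows of type D (only needed when i ≤ r)
      by_cases hir : i ≤ r
      · -- full construction
        have hjof : ∀ l : Fin (r - i), i + (l : ℕ) < r := fun l => by have := l.2; omega
        set jof : Fin (r - i) → Fin r := fun l => ⟨i + (l : ℕ), hjof l⟩ with hjofdef
        set rowD : Fin (r - i) → (Fin (s + r) → Λ) := fun l => fun t =>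
          Sum.elim (0 : Fin s → Λ)
            (Pi.single (jof l) (a * d (jof l)) : Fin r → Λ) (finSumFinEquiv.symm t) with hrowD
        have hrowD0 : ∀ l, L (rowD l) = 0 := by
          intro l
          rw [hL]
          have e1 : (fun k' => rowD l (Fin.castAdd r k')) = (0 : Fin s → Λ) := by
            funext k'
            rw [hrowD]
            simp [finSumFinEquiv_symm_apply_castAdd]
          have e2 : ∀ j, rowD l (Fin.natAdd s j)
              = (Pi.single (jof l) (a * d (jof l)) : Fin r → Λ) j := by
            intro j
            rw [hrowD]
            simp [finSumFinEquiv_symm_apply_natAdd]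
          rw [e1, map_zero, zero_add]
          simp only [e2]
          have e3 : ∑ j, ((Pi.single (jof l) (a * d (jof l)) : Fin r → Λ) j) • x j
              = (a * d (jof l)) • x (jof l) := by
            simp [Pi.single_apply, ite_smul, Finset.sum_ite_eq, Finset.mem_univ]
          rw [e3]
          have kerelt : d (jof l) • x (jof l) ∈ LinearMap.ker f := by
            rw [LinearMap.mem_ker, map_smul, hx]
            funext j'
            rw [hbval b (jof l)]
            show d (jof l) • Ideal.Quotient.mk (Ideal.span {d j'})
              ((Pi.single (jof l) b : Fin r → Λ) j') = 0
            have : d (jof l) • Ideal.Quotient.mk (Ideal.span {d j'})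
                ((Pi.single (jof l) b : Fin r → Λ) j')
                = Ideal.Quotient.mk (Ideal.span {d j'})
                  (d (jof l) * (Pi.single (jof l) b : Fin r → Λ) j') := rfl
            rw [this, Ideal.Quotient.eq_zero_iff_mem, Ideal.mem_span_singleton]
            by_cases hjj : j' = jof l
            · subst hjj
              simp only [Pi.single_eq_same]
              exact Dvd.intro _ rfl
            · rw [Pi.single_eq_of_ne hjj, mul_zero]
              exact dvd_zero _
          have hzz := Module.mem_annihilator.mp haK ⟨_, kerelt⟩
          have hz : a • (d (jof l) • x (jof l)) = 0 := congrArg Subtype.val hzz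
          rw [smul_smul] at hz
          rw [hz]
        -- the index equivalence and the determinant
        have hsz : s + r - i = s + (r - i) := by omega
        set e : Fin (s + r - i) ≃ Fin s ⊕ Fin (r - i) :=
          (finCongr hsz).trans finSumFinEquiv.symm with he
        set VV : Fin s ⊕ Fin (r - i) → (Fin (s + r) → Λ) := Sum.elim rowM rowD with hVV
        set cc : Fin s ⊕ Fin (r - i) → Fin (s + r) :=
          Sum.elim (fun k => Fin.castAdd r k) (fun l => Fin.natAdd s (jof l)) with hcc
        set W : Matrix (Fin s ⊕ Fin (r - i)) (Fin s ⊕ Fin (r - i)) Λ :=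
          Matrix.of (fun t s' => VV t (cc s')) with hW
        have hVV0 : ∀ t, L (VV t) = 0 := by
          rintro (k | l)
          · exact hrowM0 k
          · exact hrowD0 l
        have hmem := mem_fittingIdeal_of (i := i) L hLsurj (fun a' => VV (e a'))
          (fun a' => cc (e a')) (fun a' => hVV0 (e a'))
        have hdet1 : Matrix.det (Matrix.of fun a' b' => VV (e a') (cc (e b'))) = W.det := by
          have : (Matrix.of fun a' b' => VV (e a') (cc (e b'))) = W.submatrix e e := rfl
          rw [this, Matrix.det_submatrix_equiv_self]
        have hWblocks : W = Matrix.fromBlocks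
            (Matrix.diagonal (fun _ : Fin s => a * b))
            (Matrix.of fun k l => -(a * μ k (jof l)))
            0
            (Matrix.diagonal (fun l : Fin (r - i) => a * d (jof l))) := by
          ext t s'
          rcases t with k | l <;> rcases s' with k' | l'
          · show rowM k (Fin.castAdd r k') = _
            rw [hrowM]
            simp only [finSumFinEquiv_symm_apply_castAdd, Sum.elim_inl,
              Matrix.fromBlocks_apply₁₁]
            simp [Pi.single_apply, Matrix.diagonal, eq_comm]
          · show rowM k (Fin.natAdd s (jof l')) = _
            rw [hrowM]
            simp [finSumFinEquiv_symm_apply_natAdd]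
          · show rowD l (Fin.castAdd r k') = _
            rw [hrowD]
            simp [finSumFinEquiv_symm_apply_castAdd]
          · show rowD l (Fin.natAdd s (jof l')) = _
            rw [hrowD]
            simp only [finSumFinEquiv_symm_apply_natAdd, Sum.elim_inr,
              Matrix.fromBlocks_apply₂₂]
            have hinj : jof l' = jof l ↔ l' = l := by
              constructor
              · intro hh
                have := congrArg (fun z : Fin r => (z : ℕ)) hh
                simp only [hjofdef] at this
                exact Fin.ext (by omega)
              · intro hh; rw [hh]
            simp [Pi.single_apply, Matrix.diagonal, hinj, eq_comm]
        have hWdet : W.det = a ^ (s + (r - i)) * b ^ s * D := by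
          rw [hWblocks, Matrix.det_fromBlocks_zero₂₁, Matrix.det_diagonal,
            Matrix.det_diagonal]
          have hp1 : ∏ _k : Fin s, (a * b) = (a * b) ^ s := by
            rw [Finset.prod_const, Finset.card_univ, Fintype.card_fin]
          have hp2 : ∏ l : Fin (r - i), (a * d (jof l))
              = a ^ (r - i) * ∏ l : Fin (r - i), d (jof l) := by
            rw [Finset.prod_mul_distrib, Finset.prod_const, Finset.card_univ,
              Fintype.card_fin]
          have hp3 : ∏ l : Fin (r - i), d (jof l) = D := by
            rw [hD]
            refine Finset.prod_bij (fun l _ => jof l) ?_ ?_ ?_ ?_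
            · intro l _
              simp only [Finset.mem_filter, Finset.mem_univ, true_and, hjofdef]
              omega
            · intro l1 _ l2 _ hh
              have := congrArg (fun z : Fin r => (z : ℕ)) hh
              simp only [hjofdef] at this
              exact Fin.ext (by omega)
            · intro j hj
              simp only [Finset.mem_filter, Finset.mem_univ, true_and] at hj
              have hj2 : (j : ℕ) - i < r - i := by have := j.2; omega
              refine ⟨⟨(j : ℕ) - i, hj2⟩, Finset.mem_univ _, ?_⟩
              simp only [hjofdef]
              exact Fin.ext (by simp; omega)
            · intro l _; rfl
          rw [hp1, hp2, hp3, mul_pow]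
          ring
        rw [hdet1, hWdet] at hmem
        exact hmem
      · -- case r < i : D = 1 and small diagonal matrix
        push_neg at hir
        have hq : s + r - i ≤ s := by omega
        have hmem := mem_fittingIdeal_of (i := i) L hLsurj
          (fun a' => rowM (Fin.castLE hq a'))
          (fun a' => Fin.castAdd r (Fin.castLE hq a'))
          (fun a' => hrowM0 _)
        have hdet2 : Matrix.det (Matrix.of fun a' b' : Fin (s + r - i) =>
            rowM (Fin.castLE hq a') (Fin.castAdd r (Fin.castLE hq b')))
            = (a * b) ^ (s + r - i) := by
          have hdiag : (Matrix.of fun a' b' : Fin (s + r - i) =>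
              rowM (Fin.castLE hq a') (Fin.castAdd r (Fin.castLE hq b')))
              = Matrix.diagonal (fun _ : Fin (s + r - i) => a * b) := by
            ext a' b'
            show rowM (Fin.castLE hq a') (Fin.castAdd r (Fin.castLE hq b')) = _
            rw [hrowM]
            simp only [finSumFinEquiv_symm_apply_castAdd, Sum.elim_inl]
            simp [Pi.single_apply, Matrix.diagonal, Fin.castLE_inj, eq_comm]
          rw [hdiag, Matrix.det_diagonal, Finset.prod_const, Finset.card_univ,
            Fintype.card_fin]
        rw [hdet2] at hmem
        have hDone : D = 1 := by
          rw [hD]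
          have : Finset.univ.filter (fun j : Fin r => i ≤ (j : ℕ)) = ∅ := by
            refine Finset.filter_false_of_mem (fun j _ => ?_)
            have := j.2; omega
          rw [this, Finset.prod_empty]
        rw [hDone, mul_one]
        have hrs : r - i = 0 := by omega
        rw [hrs, add_zero]
        have : a ^ s * b ^ s = (a * b) ^ (s + r - i) * (a * b) ^ (s - (s + r - i)) := by
          rw [← pow_add]
          have : s + r - i + (s - (s + r - i)) = s := by omega
          rw [this, mul_pow]
        rw [this]
        exact Ideal.mul_mem_right _ _ hmem
    -- conclude B-side from claim
    rw [Ideal.mul_le]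
    intro y hy z hz
    obtain ⟨zc, hzc⟩ := Ideal.mem_span_singleton'.mp hz
    refine Submodule.span_induction ?_ ?_ ?_ ?_ hy
    · rintro w ⟨a, haK, b, hbC, rfl⟩
      have hcl := claim a haK b hbC
      have : a ^ (s + (r - i)) * b ^ s * z = zc * (a ^ (s + (r - i)) * b ^ s * D) := by
        rw [← hzc]; ring
      rw [this]
      exact Ideal.mul_mem_left _ _ hcl
    · simp
    · intro z1 z2 _ _ h1 h2
      rw [add_mul]
      exact Ideal.add_mem _ h1 h2
    · intro cz zz _ hzz
      rw [smul_mul_assoc]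
      exact Submodule.smul_mem _ _ hzz

/-- Let `O` be a complete DVR, `Λ = O[[T]]` or `O[[T₁,T₂]]` (i.e. `Λ = O[[T₁,…,T_v]]` with
`v = 1` or `v = 2`), and `M` a finitely generated torsion `Λ`-module pseudo-isomorphic to
an elementary module `E = ⊕_{j=1}^r Λ/d_j Λ` with `d_{j+1} ∣ d_j` (a pseudo-isomorphism
`f : M → E` has pseudo-null — i.e. annihilator of height `≥ 2` — kernel and cokernel).
Then for each `i ≥ 0`, `Fitt_{Λ,i}(M)` and `(∏_{j>i} d_j)` agree up to multiplication by
ideals of height at least two: there are ideals `A, B` of `Λ` of height `≥ 2` with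
`A·Fitt_{Λ,i}(M) ⊆ (∏_{j>i} d_j)` and `B·(∏_{j>i} d_j) ⊆ Fitt_{Λ,i}(M)`. -/
theorem fitt_elementary_up_to_pseudo_iso
    {O : Type*} [CommRing O] [IsDomain O] [IsDiscreteValuationRing O]
    [IsAdicComplete (IsLocalRing.maximalIdeal O) O]
    (v : ℕ) (hv : v = 1 ∨ v = 2)
    {M : Type*} [AddCommGroup M] [Module (MvPowerSeries (Fin v) O) M]
    [Module.Finite (MvPowerSeries (Fin v) O) M]
    (htor : Module.IsTorsion (MvPowerSeries (Fin v) O) M)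
    {r : ℕ} (d : Fin r → MvPowerSeries (Fin v) O)
    (hd : ∀ j k : Fin r, j ≤ k → d k ∣ d j)
    (f : M →ₗ[MvPowerSeries (Fin v) O]
      ((j : Fin r) → MvPowerSeries (Fin v) O ⧸ Ideal.span {d j}))
    (hker : heightGE (Module.annihilator (MvPowerSeries (Fin v) O)
      (LinearMap.ker f)) 2)
    (hcoker : heightGE (Module.annihilator (MvPowerSeries (Fin v) O)
      ((((j : Fin r) → MvPowerSeries (Fin v) O ⧸ Ideal.span {d j}) ⧸
        LinearMap.range f))) 2)
    (i : ℕ) :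
    ∃ A B : Ideal (MvPowerSeries (Fin v) O), heightGE A 2 ∧ heightGE B 2 ∧
      A * fittingIdeal (MvPowerSeries (Fin v) O) M i
        ≤ Ideal.span {∏ j ∈ Finset.univ.filter (fun j : Fin r => i ≤ (j : ℕ)), d j} ∧
      B * Ideal.span {∏ j ∈ Finset.univ.filter (fun j : Fin r => i ≤ (j : ℕ)), d j}
        ≤ fittingIdeal (MvPowerSeries (Fin v) O) M i := by
  exact aux_fitt d hd f hker hcoker i
end

section
/- Let O be a complete DVR with uniformizer π, N_1 ≤ N_2 positive integers, and let ν : O/π^{N_1}O → O/π^{N_2}O be the injection a ↦ a·π^{N_2−N_1}. Let G be a profinite group and ρ a character of G valued in O^× with H^0(G, (O/πO)(ρ)) = 0. Then the induced map H^1(ν) : H^1(G, (O/π^{N_1}O)(ρ)) → H^1(G, (O/π^{N_2}O)(ρ)) is injective, and its image equals the π^{N_1}-torsion submodule paired appropriately: H^1(G, (O/π^{N_1}O)(ρ)) ≅ H^1(G, (O/π^{N_2}O)(ρ))[π^{N_1}]. -/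
/-- The injection `ν : O/π^{N₁} O → O/π^{N₂} O`, `a ↦ a·π^{N₂-N₁}`. -/
noncomputable def nuMap {O : Type*} [CommRing O] (π : O) (N₁ N₂ : ℕ) (h : N₁ ≤ N₂) :
    (O ⧸ Ideal.span {π ^ N₁}) →ₗ[O] O ⧸ Ideal.span {π ^ N₂} :=
  Submodule.liftQ (Ideal.span {π ^ N₁} : Ideal O)
    ((Ideal.span {π ^ N₂} : Ideal O).mkQ.comp
      ((π ^ (N₂ - N₁)) • (LinearMap.id : O →ₗ[O] O)))
    (by
      intro x hx
      obtain ⟨c, rfl⟩ := Ideal.mem_span_singleton'.mp hx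
      simp only [LinearMap.mem_ker, LinearMap.comp_apply, LinearMap.smul_apply,
        LinearMap.id_apply, Submodule.mkQ_apply, Submodule.Quotient.mk_eq_zero]
      have hmul : π ^ (N₂ - N₁) • (c * π ^ N₁) = π ^ N₂ * c := by
        rw [smul_eq_mul]
        calc π ^ (N₂ - N₁) * (c * π ^ N₁) = c * (π ^ (N₂ - N₁) * π ^ N₁) := by ring
          _ = c * π ^ N₂ := by rw [← pow_add, Nat.sub_add_cancel h]
          _ = π ^ N₂ * c := by ring
      rw [hmul]
      exact Ideal.mul_mem_right _ _ (Ideal.mem_span_singleton_self _))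

section Helpers

variable {O : Type*} [CommRing O]

lemma nuMap_mk (π : O) (N₁ N₂ : ℕ) (h : N₁ ≤ N₂) (a : O) :
    nuMap π N₁ N₂ h (Submodule.Quotient.mk a) =
      Submodule.Quotient.mk (π ^ (N₂ - N₁) * a) := by
  show Submodule.liftQ _ _ _ (Submodule.Quotient.mk a) = _
  rw [Submodule.liftQ_apply]
  simp only [LinearMap.comp_apply, LinearMap.smul_apply, LinearMap.id_apply,
    Submodule.mkQ_apply, smul_eq_mul]

variable [IsDomain O]

lemma span_pow_cancel {π : O} (hπ : π ≠ 0) (m k : ℕ) {x : O}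
    (hx : π ^ m * x ∈ Ideal.span {π ^ (m + k)}) : x ∈ Ideal.span {π ^ k} := by
  obtain ⟨c, hc⟩ := Ideal.mem_span_singleton'.mp hx
  rw [Ideal.mem_span_singleton']
  refine ⟨c, mul_left_cancel₀ (pow_ne_zero m hπ) ?_⟩
  rw [← hc, pow_add]; ring

lemma nuMap_injective {π : O} (hπ : π ≠ 0) (N₁ N₂ : ℕ) (h : N₁ ≤ N₂) :
    Function.Injective (nuMap π N₁ N₂ h) := by
  intro x y hxy
  obtain ⟨a, rfl⟩ := Submodule.Quotient.mk_surjective _ x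
  obtain ⟨b, rfl⟩ := Submodule.Quotient.mk_surjective _ y
  rw [nuMap_mk, nuMap_mk, Submodule.Quotient.eq] at hxy
  rw [Submodule.Quotient.eq]
  have : π ^ (N₂ - N₁) * (a - b) ∈ Ideal.span {π ^ ((N₂ - N₁) + N₁)} := by
    rw [Nat.sub_add_cancel h, mul_sub]; exact hxy
  exact span_pow_cancel hπ _ _ this

lemma pow_smul_nuMap (π : O) (N₁ N₂ : ℕ) (h : N₁ ≤ N₂) (x : O ⧸ Ideal.span {π ^ N₁}) :
    (π ^ N₁ : O) • nuMap π N₁ N₂ h x = 0 := by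
  obtain ⟨a, rfl⟩ := Submodule.Quotient.mk_surjective _ x
  rw [nuMap_mk, ← Submodule.Quotient.mk_smul, Submodule.Quotient.mk_eq_zero]
  rw [Ideal.mem_span_singleton']
  exact ⟨a, by rw [smul_eq_mul, ← mul_assoc, ← pow_add, Nat.add_sub_cancel' h]; ring⟩

variable {G : Type*} [Group G] (ρ : G →* Oˣ)

lemma h0_base {π : O} 
    (hH0 : ∀ w : O ⧸ Ideal.span {π}, (∀ g : G, (ρ g : O) • w = w) → w = 0)
    (a : O) (ha : ∀ g : G, (ρ g : O) * a - a ∈ Ideal.span {π}) :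
    a ∈ Ideal.span {π} := by
  have : (Submodule.Quotient.mk a : O ⧸ Ideal.span {π}) = 0 := by
    apply hH0
    intro g
    rw [← Submodule.Quotient.mk_smul, Submodule.Quotient.eq]
    simpa [smul_eq_mul] using ha g
  rwa [Submodule.Quotient.mk_eq_zero] at this

lemma h0_pow {π : O} (hπ : π ≠ 0)
    (hH0 : ∀ w : O ⧸ Ideal.span {π}, (∀ g : G, (ρ g : O) • w = w) → w = 0) :
    ∀ k : ℕ, ∀ a : O, (∀ g : G, (ρ g : O) * a - a ∈ Ideal.span {π ^ (k + 1)}) →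
      a ∈ Ideal.span {π ^ (k + 1)} := by
  intro k
  induction k with
  | zero =>
    intro a ha
    rw [pow_one]
    exact h0_base ρ hH0 a (fun g => by simpa [pow_one] using ha g)
  | succ k ih =>
    intro a ha
    have h1 : a ∈ Ideal.span {π} := by
      apply h0_base ρ hH0
      intro g
      refine Ideal.span_singleton_le_span_singleton.mpr ?_ (ha g)
      exact dvd_pow_self π (Nat.succ_ne_zero _)
    obtain ⟨b, hb⟩ := Ideal.mem_span_singleton'.mp h1
    -- a = b * π
    have hb' : ∀ g : G, (ρ g : O) * b - b ∈ Ideal.span {π ^ (k + 1)} := by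
      intro g
      apply span_pow_cancel hπ 1
      have : π ^ 1 * ((ρ g : O) * b - b) = (ρ g : O) * a - a := by
        rw [← hb]; ring
      rw [this]
      have hx := ha g
      rwa [show 1 + (k+1) = k + 1 + 1 from by ring]
    have := ih b hb'
    obtain ⟨d, hd⟩ := Ideal.mem_span_singleton'.mp this
    rw [Ideal.mem_span_singleton']
    exact ⟨d, by rw [← hb, ← hd, pow_succ]; ring⟩

lemma fixed_eq_zero {π : O} (hπ : π ≠ 0)
    (hH0 : ∀ w : O ⧸ Ideal.span {π}, (∀ g : G, (ρ g : O) • w = w) → w = 0)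
    {N : ℕ} (hN : 0 < N) (w : O ⧸ Ideal.span {π ^ N})
    (hw : ∀ g : G, (ρ g : O) • w = w) : w = 0 := by
  obtain ⟨k, rfl⟩ : ∃ k, N = k + 1 := ⟨N - 1, (Nat.succ_pred_eq_of_pos hN).symm⟩
  obtain ⟨a, rfl⟩ := Submodule.Quotient.mk_surjective _ w
  rw [Submodule.Quotient.mk_eq_zero]
  apply h0_pow ρ hπ hH0 k a
  intro g
  have := hw g
  rw [← Submodule.Quotient.mk_smul, Submodule.Quotient.eq] at this
  simpa [smul_eq_mul] using this

noncomputable def redMap (π : O) (M₁ M₂ : ℕ) (h : M₁ ≤ M₂) :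
    (O ⧸ Ideal.span {π ^ M₂}) →ₗ[O] O ⧸ Ideal.span {π ^ M₁} :=
  Submodule.liftQ _ (Ideal.span {π ^ M₁} : Ideal O).mkQ
    (by
      rw [Submodule.ker_mkQ]
      exact Ideal.span_singleton_le_span_singleton.mpr (pow_dvd_pow π h))

omit [IsDomain O] in
lemma redMap_mk (π : O) (M₁ M₂ : ℕ) (h : M₁ ≤ M₂) (a : O) :
    redMap π M₁ M₂ h (Submodule.Quotient.mk a) = Submodule.Quotient.mk a := by
  show Submodule.liftQ _ _ _ (Submodule.Quotient.mk a) = _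
  rw [Submodule.liftQ_apply, Submodule.mkQ_apply]

omit [IsDomain O] in
lemma nuMap_redMap (π : O) (N₁ N₂ : ℕ) (h : N₁ ≤ N₂) (x : O ⧸ Ideal.span {π ^ N₂}) :
    nuMap π (N₂ - N₁) N₂ (Nat.sub_le _ _) (redMap π (N₂ - N₁) N₂ (Nat.sub_le _ _) x)
      = (π ^ N₁ : O) • x := by
  obtain ⟨a, rfl⟩ := Submodule.Quotient.mk_surjective _ x
  rw [redMap_mk, nuMap_mk, ← Submodule.Quotient.mk_smul, smul_eq_mul,
    Nat.sub_sub_self h]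

lemma mem_range_nuMap_of_red_zero {π : O} (hπ : π ≠ 0) (N₁ N₂ : ℕ) (h : N₁ ≤ N₂)
    (x : O ⧸ Ideal.span {π ^ N₂}) (hx : redMap π (N₂ - N₁) N₂ (Nat.sub_le _ _) x = 0) :
    ∃ y : O ⧸ Ideal.span {π ^ N₁}, nuMap π N₁ N₂ h y = x := by
  obtain ⟨a, rfl⟩ := Submodule.Quotient.mk_surjective _ x
  rw [redMap_mk, Submodule.Quotient.mk_eq_zero] at hx
  obtain ⟨c, hc⟩ := Ideal.mem_span_singleton'.mp hx
  exact ⟨Submodule.Quotient.mk c, by rw [nuMap_mk, ← hc, mul_comm]⟩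

lemma h1_injective {π : O} (hπ : π ≠ 0)
    (hH0 : ∀ w : O ⧸ Ideal.span {π}, (∀ g : G, (ρ g : O) • w = w) → w = 0)
    (M₁ M₂ : ℕ) (hM : M₁ ≤ M₂) (hM2 : 0 < M₂)
    (f : G → O ⧸ Ideal.span {π ^ M₁})
    (hb : ∃ w, ∀ g : G, nuMap π M₁ M₂ hM (f g) = (ρ g : O) • w - w) :
    ∃ v, ∀ g : G, f g = (ρ g : O) • v - v := by
  obtain ⟨w, hw⟩ := hb
  have hfix : ∀ g : G, (ρ g : O) • ((π ^ M₁ : O) • w) = (π ^ M₁ : O) • w := by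
    intro g
    have h0 : (π ^ M₁ : O) • ((ρ g : O) • w - w) = 0 := by
      rw [← hw g, pow_smul_nuMap]
    rw [smul_sub] at h0
    have := sub_eq_zero.mp h0
    rw [smul_comm] at this
    rw [this]
  have hzero : (π ^ M₁ : O) • w = 0 := fixed_eq_zero ρ hπ hH0 hM2 _ hfix
  obtain ⟨c, rfl⟩ := Submodule.Quotient.mk_surjective _ w
  rw [← Submodule.Quotient.mk_smul, Submodule.Quotient.mk_eq_zero, smul_eq_mul] at hzero
  have hc : c ∈ Ideal.span {π ^ (M₂ - M₁)} := by
    apply span_pow_cancel hπ M₁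
    rwa [Nat.add_sub_cancel' hM]
  obtain ⟨d, hd⟩ := Ideal.mem_span_singleton'.mp hc
  refine ⟨Submodule.Quotient.mk d, fun g => ?_⟩
  apply nuMap_injective hπ M₁ M₂ hM
  rw [map_sub, map_smul, nuMap_mk, hw g]
  congr 1 <;> rw [show (Submodule.Quotient.mk c : O ⧸ Ideal.span {π ^ M₂}) = Submodule.Quotient.mk (π ^ (M₂ - M₁) * d) from by rw [show π ^ (M₂ - M₁) * d = c from by rw [← hd]; ring]]

end Helpers

/-- Let `O` be a complete DVR with uniformizer `π`, `N₁ ≤ N₂`, and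
`ν : O/π^{N₁} O → O/π^{N₂} O`, `a ↦ a·π^{N₂−N₁}`.  Let `G` be a (profinite) group and `ρ`
an `O^×`-valued character of `G` with `H⁰(G, (O/π O)(ρ)) = 0`.  Then the induced map
`H¹(ν) : H¹(G, (O/π^{N₁} O)(ρ)) → H¹(G, (O/π^{N₂} O)(ρ))` is injective, and its image is
the `π^{N₁}`-torsion submodule: `H¹(G, (O/π^{N₁})(ρ)) ≅ H¹(G, (O/π^{N₂})(ρ))[π^{N₁}]`.
Cohomology is presented by `1`-cocycles modulo coboundaries. -/
theorem cohomology_reduction_torsion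
    {O : Type*} [CommRing O] [IsDomain O] [IsDiscreteValuationRing O]
    [IsAdicComplete (IsLocalRing.maximalIdeal O) O]
    (π : O) (hπ : Irreducible π) (N₁ N₂ : ℕ) (h12 : N₁ ≤ N₂) (h1 : 0 < N₁)
    {G : Type*} [Group G] (ρ : G →* Oˣ)
    (hH0 : ∀ w : O ⧸ Ideal.span {π}, (∀ g : G, (ρ g : O) • w = w) → w = 0) :
    -- `H¹(ν)` is injective
    (∀ f : G → O ⧸ Ideal.span {π ^ N₁},
      (∀ g h : G, f (g * h) = f g + (ρ g : O) • f h) →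
      (∃ w, ∀ g : G, nuMap π N₁ N₂ h12 (f g) = (ρ g : O) • w - w) →
      ∃ w, ∀ g : G, f g = (ρ g : O) • w - w) ∧
    -- the image of `H¹(ν)` is killed by `π^{N₁}`
    (∀ f : G → O ⧸ Ideal.span {π ^ N₁},
      (∀ g h : G, f (g * h) = f g + (ρ g : O) • f h) →
      ∀ g : G, (π ^ N₁ : O) • nuMap π N₁ N₂ h12 (f g) = 0) ∧
    -- every `π^{N₁}`-torsion class comes from `H¹(G, O/π^{N₁})`
    (∀ F : G → O ⧸ Ideal.span {π ^ N₂},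
      (∀ g h : G, F (g * h) = F g + (ρ g : O) • F h) →
      (∃ w, ∀ g : G, (π ^ N₁ : O) • F g = (ρ g : O) • w - w) →
      ∃ (f : G → O ⧸ Ideal.span {π ^ N₁}) (w : O ⧸ Ideal.span {π ^ N₂}),
        (∀ g h : G, f (g * h) = f g + (ρ g : O) • f h) ∧
        ∀ g : G, F g = nuMap π N₁ N₂ h12 (f g) + ((ρ g : O) • w - w)) := by
  have hπ0 : π ≠ 0 := hπ.ne_zero
  have hN2 : 0 < N₂ := lt_of_lt_of_le h1 h12
  refine ⟨?_, ?_, ?_⟩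
  · intro f _ hb
    exact h1_injective ρ hπ0 hH0 N₁ N₂ h12 hN2 f hb
  · intro f _ g
    exact pow_smul_nuMap π N₁ N₂ h12 (f g)
  · intro F hF ⟨w, hw⟩
    -- reduce mod π^{N₂-N₁}
    set q := redMap π (N₂ - N₁) N₂ (Nat.sub_le _ _) with hq
    have key : ∃ u, ∀ g : G, q (F g) = (ρ g : O) • u - u := by
      apply h1_injective ρ hπ0 hH0 (N₂ - N₁) N₂ (Nat.sub_le _ _) hN2
      exact ⟨w, fun g => by rw [nuMap_redMap π N₁ N₂ h12]; exact hw g⟩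
    obtain ⟨u, hu⟩ := key
    obtain ⟨c, hc⟩ := Submodule.Quotient.mk_surjective _ u
    set w₂ : O ⧸ Ideal.span {π ^ N₂} := Submodule.Quotient.mk c with hw₂
    have hqw₂ : q w₂ = u := by rw [hw₂, hq, redMap_mk, hc]
    have hred : ∀ g : G, q (F g - ((ρ g : O) • w₂ - w₂)) = 0 := by
      intro g
      rw [map_sub, map_sub, map_smul, hqw₂, hu g, sub_self]
    have hrange : ∀ g : G, ∃ y : O ⧸ Ideal.span {π ^ N₁},
        nuMap π N₁ N₂ h12 y = F g - ((ρ g : O) • w₂ - w₂) :=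
      fun g => mem_range_nuMap_of_red_zero hπ0 N₁ N₂ h12 _ (hred g)
    choose f hf using hrange
    refine ⟨f, w₂, ?_, fun g => by rw [hf g]; abel⟩
    intro g h
    apply nuMap_injective hπ0 N₁ N₂ h12
    rw [map_add, map_smul, hf, hf, hf, hF g h, map_mul ρ, Units.val_mul, mul_smul,
      smul_sub, smul_sub]
    abel
end
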